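/- arXiv:2110.14163 — 5 statements merged into one kernel-verified Lean document; each statement's English description precedes it below -/
import Mathlib

section
/- For a feedforward network of depth L+1 with h^0 = x, h^k = σ(w^{k-1} h^{k-1}) for 1 ≤ k ≤ L, and logits z = w^L h^L, where |σ(x)| ≤ a|x| and |σ'| ≤ a, the trace of the correlation matrix of the Jacobian of any logit z_i with respect to the weights w^k of layer k satisfies tr(E[(∂z_i/∂w^k)(∂z_i/∂w^k)^T]) ≤ a^{2L} tr(E[x x^T]) ∏_{j=0, j≠k}^{L} ‖w^j‖₂². -/
open scoped Matrix.Norms.L2Operator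
open Matrix

lemma nsq_mulVec_le {m n : ℕ} (A : Matrix (Fin m) (Fin n) ℝ) (v : Fin n → ℝ) :
    ∑ r, (A.mulVec v) r ^ 2 ≤ ‖A‖ ^ 2 * ∑ r, v r ^ 2 := by
  have h := A.l2_opNorm_mulVec ((EuclideanSpace.equiv (Fin n) ℝ).symm v)
  have e1 : ‖(EuclideanSpace.equiv (Fin m) ℝ).symm (A *ᵥ v)‖ ^ 2 = ∑ r, (A.mulVec v) r ^ 2 := by
    rw [EuclideanSpace.norm_eq, Real.sq_sqrt (by positivity)]
    simp [sq_abs]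
  have e2 : ‖(EuclideanSpace.equiv (Fin n) ℝ).symm v‖ ^ 2 = ∑ r, v r ^ 2 := by
    rw [EuclideanSpace.norm_eq, Real.sq_sqrt (by positivity)]
    simp [sq_abs]
  calc ∑ r, (A.mulVec v) r ^ 2 = ‖(EuclideanSpace.equiv (Fin m) ℝ).symm (A *ᵥ v)‖ ^ 2 := e1.symm
    _ ≤ (‖A‖ * ‖(EuclideanSpace.equiv (Fin n) ℝ).symm v‖) ^ 2 := by
        apply pow_le_pow_left₀ (norm_nonneg _) h
    _ = ‖A‖ ^ 2 * ∑ r, v r ^ 2 := by rw [mul_pow, e2]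

lemma nsq_vecMul_le {m n : ℕ} (A : Matrix (Fin m) (Fin n) ℝ) (v : Fin m → ℝ) :
    ∑ b, (Matrix.vecMul v A) b ^ 2 ≤ ‖A‖ ^ 2 * ∑ r, v r ^ 2 := by
  have := nsq_mulVec_le Aᵀ v
  rw [Matrix.mulVec_transpose] at this
  have hT : ‖Aᵀ‖ = ‖A‖ := by
    rw [← Matrix.conjTranspose_eq_transpose_of_trivial, Matrix.l2_opNorm_conjTranspose]
  rwa [hT] at this

lemma nsq_ptwise_le {n : ℕ} (u v : Fin n → ℝ) (a : ℝ) (ha : 0 ≤ a)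
    (hb : ∀ r, |u r| ≤ a * |v r|) :
    ∑ r, u r ^ 2 ≤ a ^ 2 * ∑ r, v r ^ 2 := by
  rw [Finset.mul_sum]
  apply Finset.sum_le_sum
  intro r _
  calc u r ^ 2 = |u r| ^ 2 := (sq_abs _).symm
    _ ≤ (a * |v r|) ^ 2 := pow_le_pow_left₀ (abs_nonneg _) (hb r) 2
    _ = a ^ 2 * v r ^ 2 := by rw [mul_pow, sq_abs]

/-- for a depth-`L+1` feedforward network `h⁰ = x`, `h^{k+1} = σ(Wₖ h^k)` for
`k < L`, logits `z = W_L h^L`, with `|σ(t)| ≤ a|t|` and `|σ'| ≤ a`, the trace of the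
correlation matrix of the Jacobian of logit `z_i` w.r.t. the layer-`k` weights satisfies
`tr E[(∂z_i/∂wᵏ)(∂z_i/∂wᵏ)ᵀ] ≤ a^{2L} tr E[xxᵀ] ∏_{j ≤ L, j ≠ k} ‖wʲ‖₂²`.
The backpropagated quantities `gH = ∂z_i/∂h^k` and `gU = ∂z_i/∂u^{k+1}` are specified via
their chain-rule recursions, with `s = σ'(u^{k+1})` bounded by `a` in magnitude. -/
theorem trace_logit_jacobian_corr_le
    {Ω : Type*} [Fintype Ω] (μ : Ω → ℝ) (hμ : ∀ ω, 0 ≤ μ ω) (hμ1 : ∑ ω, μ ω = 1)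
    (L : ℕ) (d : ℕ → ℕ)
    (W : (j : ℕ) → Matrix (Fin (d (j + 1))) (Fin (d j)) ℝ)
    (x : Ω → Fin (d 0) → ℝ)
    (σ : ℝ → ℝ) (a : ℝ) (ha : 0 ≤ a) (hσ0 : σ 0 = 0) (hσ : ∀ t : ℝ, |σ t| ≤ a * |t|)
    (h : Ω → (k : ℕ) → Fin (d k) → ℝ)
    (hx : ∀ ω, h ω 0 = x ω)
    (hrec : ∀ ω, ∀ k < L, h ω (k + 1) = fun r => σ ((W k).mulVec (h ω k) r))
    (i : Fin (d (L + 1)))                                       -- the logit index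
    (s : Ω → (k : ℕ) → Fin (d (k + 1)) → ℝ)                     -- σ'(u^{k+1})
    (hs : ∀ ω k r, |s ω k r| ≤ a)
    (gH : Ω → (k : ℕ) → Fin (d k) → ℝ)                          -- ∂z_i/∂h^k
    (hgHL : ∀ ω, gH ω L = fun b => W L i b)
    (hgH : ∀ ω, ∀ k < L,
      gH ω k = Matrix.vecMul (fun r => gH ω (k + 1) r * s ω k r) (W k))
    (gU : Ω → (k : ℕ) → Fin (d (k + 1)) → ℝ)                    -- ∂z_i/∂u^{k+1}
    (hgUL : ∀ ω, gU ω L = Pi.single i 1)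
    (hgU : ∀ ω, ∀ k < L, gU ω k = fun r => gH ω (k + 1) r * s ω k r)
    (k : ℕ) (hk : k ≤ L) :
    (∑ ω, μ ω • Matrix.vecMulVec
        (fun rb : Fin (d (k + 1)) × Fin (d k) => gU ω k rb.1 * h ω k rb.2)
        (fun rb : Fin (d (k + 1)) × Fin (d k) => gU ω k rb.1 * h ω k rb.2)).trace ≤
      a ^ (2 * L) * (∑ ω, μ ω • Matrix.vecMulVec (x ω) (x ω)).trace *
        ∏ j ∈ (Finset.range (L + 1)).erase k, ‖W j‖ ^ 2 := by
  classical
  -- gH in terms of gU, uniformly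
  have hGHg : ∀ ω, ∀ m, m ≤ L → gH ω m = Matrix.vecMul (gU ω m) (W m) := by
    intro ω m hm
    rcases eq_or_lt_of_le hm with rfl | hm'
    · rw [hgHL, hgUL]
      funext b
      simp [Matrix.vecMul, dotProduct, Pi.single_apply, ite_mul]
    · rw [hgH ω m hm', hgU ω m hm']
  -- forward bound on h
  have hH : ∀ ω, ∀ m, m ≤ L →
      ∑ r, h ω m r ^ 2 ≤
        a ^ (2 * m) * (∏ j ∈ Finset.range m, ‖W j‖ ^ 2) * ∑ r, x ω r ^ 2 := by
    intro ω m
    induction m with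
    | zero => intro _; simp [hx ω]
    | succ m ih =>
      intro hm
      have hmL : m < L := hm
      have h1 : ∑ r, h ω (m + 1) r ^ 2 ≤ a ^ 2 * ∑ r, ((W m).mulVec (h ω m)) r ^ 2 := by
        apply nsq_ptwise_le _ _ a ha
        intro r
        rw [hrec ω m hmL]
        exact hσ _
      have h2 := nsq_mulVec_le (W m) (h ω m)
      have h3 := ih (le_of_lt hmL)
      calc ∑ r, h ω (m + 1) r ^ 2
          ≤ a ^ 2 * (‖W m‖ ^ 2 * ∑ r, h ω m r ^ 2) := by
            refine h1.trans ?_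
            exact mul_le_mul_of_nonneg_left h2 (by positivity)
        _ ≤ a ^ 2 * (‖W m‖ ^ 2 *
              (a ^ (2 * m) * (∏ j ∈ Finset.range m, ‖W j‖ ^ 2) * ∑ r, x ω r ^ 2)) := by
            refine mul_le_mul_of_nonneg_left (mul_le_mul_of_nonneg_left h3 (by positivity))
              (by positivity)
        _ = a ^ (2 * (m + 1)) * (∏ j ∈ Finset.range (m + 1), ‖W j‖ ^ 2) * ∑ r, x ω r ^ 2 := by
            rw [Finset.prod_range_succ, show 2 * (m + 1) = 2 * m + 2 by ring, pow_add]
            ring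
  -- backward bound on gU
  have hGU : ∀ ω, ∀ n m, m + n = L →
      ∑ r, gU ω m r ^ 2 ≤
        a ^ (2 * n) * ∏ j ∈ Finset.Ico (m + 1) (L + 1), ‖W j‖ ^ 2 := by
    intro ω n
    induction n with
    | zero =>
      intro m hm
      have hmL : m = L := by omega
      subst hmL
      rw [hgUL]
      simp [Pi.single_apply, apply_ite (· ^ 2)]
    | succ n ih =>
      intro m hm
      have hmL : m < L := by omega
      have hg : ∀ r, |gU ω m r| ≤ a * |gH ω (m + 1) r| := by
        intro r
        rw [hgU ω m hmL]
        simp only [abs_mul]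
        calc |gH ω (m + 1) r| * |s ω m r| ≤ |gH ω (m + 1) r| * a :=
              mul_le_mul_of_nonneg_left (hs ω m r) (abs_nonneg _)
          _ = a * |gH ω (m + 1) r| := mul_comm _ _
      have h1 : ∑ r, gU ω m r ^ 2 ≤ a ^ 2 * ∑ r, gH ω (m + 1) r ^ 2 :=
        nsq_ptwise_le _ _ a ha hg
      have h2 : ∑ r, gH ω (m + 1) r ^ 2 ≤ ‖W (m + 1)‖ ^ 2 * ∑ r, gU ω (m + 1) r ^ 2 := by
        rw [hGHg ω (m + 1) (by omega)]
        exact nsq_vecMul_le _ _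
      have h3 := ih (m + 1) (by omega)
      have hsplit : ∏ j ∈ Finset.Ico (m + 1) (L + 1), ‖W j‖ ^ 2 =
          ‖W (m + 1)‖ ^ 2 * ∏ j ∈ Finset.Ico (m + 2) (L + 1), ‖W j‖ ^ 2 :=
        Finset.prod_eq_prod_Ico_succ_bot (by omega) _
      calc ∑ r, gU ω m r ^ 2
          ≤ a ^ 2 * (‖W (m + 1)‖ ^ 2 * ∑ r, gU ω (m + 1) r ^ 2) :=
            h1.trans (mul_le_mul_of_nonneg_left h2 (by positivity))
        _ ≤ a ^ 2 * (‖W (m + 1)‖ ^ 2 *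
              (a ^ (2 * n) * ∏ j ∈ Finset.Ico (m + 2) (L + 1), ‖W j‖ ^ 2)) :=
            mul_le_mul_of_nonneg_left (mul_le_mul_of_nonneg_left h3 (by positivity))
              (by positivity)
        _ = a ^ (2 * (n + 1)) * ∏ j ∈ Finset.Ico (m + 1) (L + 1), ‖W j‖ ^ 2 := by
            rw [hsplit, show 2 * (n + 1) = 2 * n + 2 by ring, pow_add]
            ring
  -- trace computations
  have htr : ∀ {ι : Type} [Fintype ι] (v : ι → ℝ),
      (Matrix.vecMulVec v v).trace = ∑ r, v r ^ 2 := by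
    intro ι _ v
    simp [Matrix.trace, Matrix.diag, Matrix.vecMulVec_apply, sq]
  have hLHS : (∑ ω, μ ω • Matrix.vecMulVec
        (fun rb : Fin (d (k + 1)) × Fin (d k) => gU ω k rb.1 * h ω k rb.2)
        (fun rb : Fin (d (k + 1)) × Fin (d k) => gU ω k rb.1 * h ω k rb.2)).trace =
      ∑ ω, μ ω * ((∑ r, gU ω k r ^ 2) * ∑ b, h ω k b ^ 2) := by
    rw [Matrix.trace_sum]
    refine Finset.sum_congr rfl fun ω _ => ?_
    rw [Matrix.trace_smul, htr, smul_eq_mul]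
    congr 1
    rw [Fintype.sum_prod_type, Finset.sum_mul_sum]
    refine Finset.sum_congr rfl fun r _ => Finset.sum_congr rfl fun b _ => ?_
    ring
  have hRHS : (∑ ω, μ ω • Matrix.vecMulVec (x ω) (x ω)).trace =
      ∑ ω, μ ω * ∑ r, x ω r ^ 2 := by
    rw [Matrix.trace_sum]
    refine Finset.sum_congr rfl fun ω _ => ?_
    rw [Matrix.trace_smul, htr, smul_eq_mul]
  -- product splitting
  have hset : (Finset.range (L + 1)).erase k =
      Finset.range k ∪ Finset.Ico (k + 1) (L + 1) := by
    ext j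
    simp only [Finset.mem_erase, Finset.mem_range, Finset.mem_union, Finset.mem_Ico]
    omega
  have hdisj : Disjoint (Finset.range k) (Finset.Ico (k + 1) (L + 1)) := by
    rw [Finset.disjoint_left]
    intro j hj hj'
    simp only [Finset.mem_range] at hj
    simp only [Finset.mem_Ico] at hj'
    omega
  have hprod : ∏ j ∈ (Finset.range (L + 1)).erase k, ‖W j‖ ^ 2 =
      (∏ j ∈ Finset.range k, ‖W j‖ ^ 2) * ∏ j ∈ Finset.Ico (k + 1) (L + 1), ‖W j‖ ^ 2 := by
    rw [hset, Finset.prod_union hdisj]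
  have hpow : a ^ (2 * L) = a ^ (2 * (L - k)) * a ^ (2 * k) := by
    rw [← pow_add]
    congr 1
    omega
  rw [hLHS, hRHS]
  have hre : a ^ (2 * L) * (∑ ω, μ ω * ∑ r, x ω r ^ 2) *
      ∏ j ∈ (Finset.range (L + 1)).erase k, ‖W j‖ ^ 2 =
      ∑ ω, a ^ (2 * L) * (μ ω * ∑ r, x ω r ^ 2) *
        ∏ j ∈ (Finset.range (L + 1)).erase k, ‖W j‖ ^ 2 := by
    rw [Finset.mul_sum, Finset.sum_mul]
  rw [hre]
  apply Finset.sum_le_sum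
  intro ω _
  have hb1 := hGU ω (L - k) k (by omega)
  have hb2 := hH ω k hk
  have key : (∑ r, gU ω k r ^ 2) * ∑ b, h ω k b ^ 2 ≤
      (a ^ (2 * (L - k)) * ∏ j ∈ Finset.Ico (k + 1) (L + 1), ‖W j‖ ^ 2) *
        (a ^ (2 * k) * (∏ j ∈ Finset.range k, ‖W j‖ ^ 2) * ∑ r, x ω r ^ 2) := by
    apply mul_le_mul hb1 hb2 (by positivity) (by positivity)
  calc μ ω * ((∑ r, gU ω k r ^ 2) * ∑ b, h ω k b ^ 2)
      ≤ μ ω * ((a ^ (2 * (L - k)) * ∏ j ∈ Finset.Ico (k + 1) (L + 1), ‖W j‖ ^ 2) *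
        (a ^ (2 * k) * (∏ j ∈ Finset.range k, ‖W j‖ ^ 2) * ∑ r, x ω r ^ 2)) :=
        mul_le_mul_of_nonneg_left key (hμ ω)
    _ = a ^ (2 * L) * (μ ω * ∑ r, x ω r ^ 2) *
          ∏ j ∈ (Finset.range (L + 1)).erase k, ‖W j‖ ^ 2 := by
        rw [hprod, hpow]
        ring
end

section
/- For the softmax output distribution p_y = e^{z_y} / ∑_{y'} e^{z_{y'}} on m classes, the matrix ∑_{y=1}^{m} p_y (∂_z log p_y)(∂_z log p_y)^T equals (1 − ‖p‖₂²) I minus a positive semi-definite correction; in particular it is bounded above (in the Loewner order) by (1 − ‖p‖₂²) I, and hence by the identity matrix I. -/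
open Matrix

section SoftmaxAux

open Finset

private lemma softmax_key {m : ℕ} (p x : Fin m → ℝ) (hp : ∀ y, 0 ≤ p y)
    (hs : ∑ y, p y = 1) :
    ∑ y, p y * (x y - ∑ i, p i * x i)^2 ≤ (1 - ∑ y, p y ^ 2) * ∑ i, x i ^ 2 := by
  set μ := ∑ i, p i * x i with hμ
  set T := ∑ i, p i * x i ^ 2 with hT
  set S := ∑ i, x i ^ 2 with hS
  have hL : ∑ y, p y * (x y - μ)^2 = T - μ^2 := by
    have h0 : ∀ y, p y * (x y - μ)^2 = p y * x y ^2 - 2*μ*(p y * x y) + μ^2 * p y := by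
      intro y; ring
    rw [Finset.sum_congr rfl (fun y _ => h0 y), Finset.sum_add_distrib,
      Finset.sum_sub_distrib, ← Finset.mul_sum, ← Finset.mul_sum, hs, ← hμ, ← hT]
    ring
  have hD : ∑ y, ∑ y', p y * p y' * (x y - x y')^2 = 2*T - 2*μ^2 := by
    have hin : ∀ y, ∑ y', p y * p y' * (x y - x y')^2
        = x y ^2 * p y + T * p y - (2*μ) * (p y * x y) := by
      intro y
      have h1 : ∀ y', p y * p y' * (x y - x y')^2
          = x y ^2 * p y * p y' + p y * (p y' * x y' ^2) - 2*((p y * x y) * (p y' * x y')) := by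
        intro y'; ring
      rw [Finset.sum_congr rfl (fun y' _ => h1 y'), Finset.sum_sub_distrib,
        Finset.sum_add_distrib, ← Finset.mul_sum, ← Finset.mul_sum, ← Finset.mul_sum,
        ← Finset.mul_sum, hs, ← hT, ← hμ]
      ring
    rw [Finset.sum_congr rfl (fun y _ => hin y), Finset.sum_sub_distrib,
      Finset.sum_add_distrib, ← Finset.mul_sum, ← Finset.mul_sum]
    have e1 : ∑ y, x y ^2 * p y = T := by
      rw [hT]; exact Finset.sum_congr rfl fun y _ => by ring
    rw [e1, hs, ← hμ]
    ring
  have hR : ∑ y, ∑ y', (if y = y' then 0 else 2 * (p y * p y') * S)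
      = 2 * ((1 - ∑ y, p y ^2) * S) := by
    have h1 : ∀ (y y' : Fin m), (if y = y' then 0 else 2 * (p y * p y') * S)
        = 2 * (p y * p y') * S - (if y = y' then 2 * (p y * p y') * S else 0) := by
      intro y y'; split <;> ring
    simp_rw [h1, Finset.sum_sub_distrib, Finset.sum_ite_eq, mem_univ, if_true]
    have h2 : ∀ y, ∑ y', 2 * (p y * p y') * S = 2 * p y * S := by
      intro y
      have : ∑ y', 2 * (p y * p y') * S = (2 * p y * S) * ∑ y', p y' := by
        rw [Finset.mul_sum]; exact Finset.sum_congr rfl fun y' _ => by ring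
      rw [this, hs, mul_one]
    simp_rw [h2]
    have h3 : ∑ y, 2 * p y * S = 2 * S := by
      have : ∑ y, 2 * p y * S = (2 * S) * ∑ y, p y := by
        rw [Finset.mul_sum]; exact Finset.sum_congr rfl fun y _ => by ring
      rw [this, hs, mul_one]
    have h4 : ∑ y, 2 * (p y * p y) * S = (2 * S) * ∑ y, p y ^2 := by
      rw [Finset.mul_sum]; exact Finset.sum_congr rfl fun y _ => by ring
    rw [h3, h4]; ring
  have hterm : ∀ y ∈ (univ : Finset (Fin m)), ∀ y' ∈ (univ : Finset (Fin m)),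
      p y * p y' * (x y - x y')^2 ≤ (if y = y' then 0 else 2 * (p y * p y') * S) := by
    intro y _ y' _
    by_cases h : y = y'
    · simp [h]
    · simp only [h, if_false]
      have hxx : (x y - x y')^2 ≤ 2 * S := by
        have hpair := Finset.sum_pair (f := fun i => x i ^ 2) h
        have hsub : ∑ i ∈ ({y, y'} : Finset (Fin m)), x i ^2 ≤ S :=
          Finset.sum_le_sum_of_subset_of_nonneg (Finset.subset_univ _)
            (fun i _ _ => sq_nonneg _)
        rw [hpair] at hsub
        have hsub' : x y ^ 2 + x y' ^ 2 ≤ S := hsub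
        nlinarith [sq_nonneg (x y + x y')]
      calc p y * p y' * (x y - x y')^2 ≤ p y * p y' * (2 * S) :=
            mul_le_mul_of_nonneg_left hxx (mul_nonneg (hp y) (hp y'))
        _ = 2 * (p y * p y') * S := by ring
  have hmain := Finset.sum_le_sum (fun y hy => Finset.sum_le_sum (hterm y hy))
  rw [hD, hR] at hmain
  linarith [hL]

private lemma softmax_sum_matrix_mulVec {m : ℕ} (x : Fin m → ℝ)
    (A : Fin m → Matrix (Fin m) (Fin m) ℝ) :
    (∑ y, A y) *ᵥ x = ∑ y, (A y) *ᵥ x := by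
  ext i
  simp only [mulVec, dotProduct, Matrix.sum_apply, Finset.sum_apply, Finset.sum_mul]
  exact Finset.sum_comm

private lemma softmax_dot_sum {m : ℕ} (x : Fin m → ℝ) (w : Fin m → Fin m → ℝ) :
    x ⬝ᵥ (∑ y, w y) = ∑ y, x ⬝ᵥ w y := by
  simp only [dotProduct, Finset.sum_apply, Finset.mul_sum]
  exact Finset.sum_comm

private lemma softmax_quad_vmv {m : ℕ} (v x : Fin m → ℝ) :
    x ⬝ᵥ (vecMulVec v v) *ᵥ x = (v ⬝ᵥ x)^2 := by
  simp only [dotProduct, mulVec, vecMulVec, of_apply, sq, Finset.sum_mul, Finset.mul_sum]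
  rw [Finset.sum_comm]
  exact Finset.sum_congr rfl fun i _ => Finset.sum_congr rfl fun j _ => by ring

private lemma softmax_quad_A {m : ℕ} (p x : Fin m → ℝ) (v : Fin m → Fin m → ℝ) :
    x ⬝ᵥ (∑ y, p y • vecMulVec (v y) (v y)) *ᵥ x = ∑ y, p y * (v y ⬝ᵥ x)^2 := by
  rw [softmax_sum_matrix_mulVec, softmax_dot_sum]
  refine Finset.sum_congr rfl fun y _ => ?_
  rw [smul_mulVec, dotProduct_smul, smul_eq_mul, softmax_quad_vmv]

end SoftmaxAux

/-- Softmax probabilities of a logit vector. -/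
noncomputable def softmax {m : ℕ} (z : Fin m → ℝ) : Fin m → ℝ :=
  fun y => Real.exp (z y) / ∑ y', Real.exp (z y')

/-- for the softmax distribution `p` on `m` classes with
`∂_z log p_y = e_y − p`, the matrix `∑_y p_y (e_y − p)(e_y − p)ᵀ` is bounded above in the
Loewner order by `(1 − ‖p‖₂²) I` (i.e. their difference is a positive semi-definite
correction), and hence also by the identity `I`. -/
theorem softmax_score_outer_le
    {m : ℕ} (hm : 0 < m) (z : Fin m → ℝ) :
    (((1 - ∑ y, softmax z y ^ 2) • (1 : Matrix (Fin m) (Fin m) ℝ) -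
        ∑ y, softmax z y •
          Matrix.vecMulVec (Pi.single y 1 - softmax z) (Pi.single y 1 - softmax z)).PosSemidef)
      ∧
    (((1 : Matrix (Fin m) (Fin m) ℝ) -
        ∑ y, softmax z y •
          Matrix.vecMulVec (Pi.single y 1 - softmax z) (Pi.single y 1 - softmax z)).PosSemidef) := by
  set p := softmax z with hpdef
  set v : Fin m → Fin m → ℝ := fun y => Pi.single y 1 - p with hvdef
  set A : Matrix (Fin m) (Fin m) ℝ := ∑ y, p y • vecMulVec (v y) (v y) with hAdef
  have hSpos : 0 < ∑ y', Real.exp (z y') :=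
    Finset.sum_pos (fun i _ => Real.exp_pos _)
      (Finset.univ_nonempty_iff.mpr ⟨⟨0, hm⟩⟩)
  have hp : ∀ y, 0 ≤ p y := fun y => div_nonneg (Real.exp_pos _).le hSpos.le
  have hs : ∑ y, p y = 1 := by
    rw [hpdef]
    simp only [softmax]
    rw [← Finset.sum_div, div_self hSpos.ne']
  have hdot : ∀ (y : Fin m) (x : Fin m → ℝ), v y ⬝ᵥ x = x y - ∑ i, p i * x i := by
    intro y x
    rw [hvdef]
    simp only [sub_dotProduct, single_dotProduct, one_mul]
    rfl
  have hhermA : A.IsHermitian := by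
    show Aᴴ = A
    ext i j
    simp only [hAdef, Matrix.conjTranspose_apply, Matrix.sum_apply, Matrix.smul_apply,
      vecMulVec_apply, smul_eq_mul, star_trivial]
    exact Finset.sum_congr rfl fun y _ => by ring
  have hherm1 : ∀ c : ℝ, (c • (1 : Matrix (Fin m) (Fin m) ℝ)).IsHermitian := by
    intro c
    show _ = _
    ext i j
    simp only [Matrix.conjTranspose_apply, Matrix.smul_apply, Matrix.one_apply, smul_eq_mul,
      star_trivial]
    by_cases h : i = j <;> simp [h, eq_comm]
  have hquad : ∀ x : Fin m → ℝ, x ⬝ᵥ A *ᵥ x ≤ (1 - ∑ y, p y ^ 2) * ∑ i, x i ^ 2 := by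
    intro x
    rw [hAdef, softmax_quad_A]
    calc ∑ y, p y * (v y ⬝ᵥ x) ^ 2 = ∑ y, p y * (x y - ∑ i, p i * x i) ^ 2 :=
          Finset.sum_congr rfl fun y _ => by rw [hdot]
      _ ≤ (1 - ∑ y, p y ^ 2) * ∑ i, x i ^ 2 := softmax_key p x hp hs
  have hquad1 : ∀ (c : ℝ) (x : Fin m → ℝ),
      x ⬝ᵥ (c • (1 : Matrix (Fin m) (Fin m) ℝ)) *ᵥ x = c * ∑ i, x i ^ 2 := by
    intro c x
    rw [smul_mulVec, Matrix.one_mulVec, dotProduct_smul, smul_eq_mul]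
    congr 1
    simp [dotProduct, sq]
  have hsum_sq_nonneg : 0 ≤ ∑ y, p y ^ 2 := Finset.sum_nonneg fun y _ => sq_nonneg _
  constructor
  · refine posSemidef_iff_dotProduct_mulVec.mpr ⟨(hherm1 _).sub hhermA, fun x => ?_⟩
    rw [star_trivial, Matrix.sub_mulVec, dotProduct_sub, hquad1]
    have := hquad x
    linarith
  · have hone : (1 : Matrix (Fin m) (Fin m) ℝ) = (1 : ℝ) • (1 : Matrix (Fin m) (Fin m) ℝ) := by
      rw [one_smul]
    refine posSemidef_iff_dotProduct_mulVec.mpr ⟨by rw [hone]; exact (hherm1 _).sub hhermA, fun x => ?_⟩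
    rw [star_trivial, Matrix.sub_mulVec, dotProduct_sub, hone, hquad1]
    have h1 := hquad x
    have h2 : 0 ≤ ∑ i, x i ^ 2 := Finset.sum_nonneg fun i _ => sq_nonneg _
    nlinarith
end

section
/- For any logit z_i of a feedforward network, the correlation matrix of its Jacobian with respect to the layer-k weights satisfies, in the Loewner order, E[(∂z_i/∂w^k)(∂z_i/∂w^k)^T] ⪯ a^{2(L−k)} (∏_{j=k+1}^{L} ‖w^j‖₂²) · I_{d_{k+1}} ⊗ E[h^k (h^k)^T]; consequently its sorted eigenvalues are bounded entrywise by a^{2(L−k)} ∏_{j=k+1}^{L} ‖w^j‖₂² times the sorted eigenvalues of I_{d_{k+1}} ⊗ E[h^k (h^k)^T]. -/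
open scoped Matrix.Norms.L2Operator Kronecker
open Matrix

/-- Eigenvalues of a Hermitian matrix sorted in descending order, indexed by
`Fin (Fintype.card ι)` (index `0` is the largest eigenvalue). -/
noncomputable def eigDesc {ι : Type*} [Fintype ι] [DecidableEq ι]
    {A : Matrix ι ι ℝ} (hA : A.IsHermitian) (i : Fin (Fintype.card ι)) : ℝ :=
  ((hA.eigenvalues ∘ (Fintype.equivFin ι).symm) ∘
    Tuple.sort (hA.eigenvalues ∘ (Fintype.equivFin ι).symm)) i.rev

section Weyl

variable {ι : Type*} [Fintype ι] [DecidableEq ι]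

lemma repr_toEuclideanLin {A : Matrix ι ι ℝ} (hA : A.IsHermitian)
    (v : EuclideanSpace ℝ ι) (j : ι) :
    hA.eigenvectorBasis.repr (Matrix.toEuclideanLin A v) j
      = hA.eigenvalues j * hA.eigenvectorBasis.repr v j := by
  have hsym := (Matrix.isHermitian_iff_isSymmetric.1 hA)
  have hev : Matrix.toEuclideanLin A (hA.eigenvectorBasis j)
      = hA.eigenvalues j • (hA.eigenvectorBasis j) := by
    apply (WithLp.equiv 2 (ι → ℝ)).injective
    simpa using hA.mulVec_eigenvectorBasis j
  rw [OrthonormalBasis.repr_apply_apply, OrthonormalBasis.repr_apply_apply,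
    ← hsym (hA.eigenvectorBasis j) v, hev, real_inner_smul_left]

lemma inner_toEuclideanLin {A : Matrix ι ι ℝ} (hA : A.IsHermitian)
    (v : EuclideanSpace ℝ ι) :
    (inner ℝ v (Matrix.toEuclideanLin A v) : ℝ)
      = ∑ j, hA.eigenvalues j * (hA.eigenvectorBasis.repr v j)^2 := by
  rw [← hA.eigenvectorBasis.repr.inner_map_map v (Matrix.toEuclideanLin A v)]
  rw [PiLp.inner_apply]
  refine Finset.sum_congr rfl fun j _ => ?_
  rw [repr_toEuclideanLin hA v j]
  simp [RCLike.inner_apply]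
  ring

lemma norm_sq_repr {A : Matrix ι ι ℝ} (hA : A.IsHermitian) (v : EuclideanSpace ℝ ι) :
    ‖v‖^2 = ∑ j, (hA.eigenvectorBasis.repr v j)^2 := by
  rw [← real_inner_self_eq_norm_sq, ← hA.eigenvectorBasis.repr.inner_map_map v v,
    PiLp.inner_apply]
  refine Finset.sum_congr rfl fun j _ => ?_
  simp [RCLike.inner_apply]

lemma repr_eq_zero_of_mem_span {A : Matrix ι ι ℝ} (hA : A.IsHermitian)
    (S : Finset ι) (v : EuclideanSpace ℝ ι)
    (hv : v ∈ Submodule.span ℝ ((↑hA.eigenvectorBasis) '' (S : Set ι)))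
    {j : ι} (hj : j ∉ S) : hA.eigenvectorBasis.repr v j = 0 := by
  set f : EuclideanSpace ℝ ι →ₗ[ℝ] ℝ :=
    (EuclideanSpace.projₗ j).comp (hA.eigenvectorBasis.repr.toLinearEquiv.toLinearMap) with hf
  have : v ∈ LinearMap.ker f := by
    refine Submodule.span_le.2 ?_ hv
    rintro _ ⟨m, hm, rfl⟩
    have hj' : j ≠ m := fun h => hj (h ▸ hm)
    have hfm : f (hA.eigenvectorBasis m) = hA.eigenvectorBasis.repr (hA.eigenvectorBasis m) j :=
      rfl
    rw [SetLike.mem_coe, LinearMap.mem_ker, hfm, hA.eigenvectorBasis.repr_self m]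
    simp [EuclideanSpace.single_apply, hj']
  simpa [hf] using this

lemma finrank_span_eigen {A : Matrix ι ι ℝ} (hA : A.IsHermitian) (S : Finset ι) :
    Module.finrank ℝ (Submodule.span ℝ ((↑hA.eigenvectorBasis) '' (S : Set ι))) = S.card := by
  have hli : LinearIndependent ℝ (fun j : S => hA.eigenvectorBasis j) :=
    (hA.eigenvectorBasis.orthonormal.linearIndependent).comp _ Subtype.val_injective
  rw [Set.image_eq_range]
  exact (finrank_span_eq_card hli).trans (Fintype.card_coe S)

lemma quad_ge {A : Matrix ι ι ℝ} (hA : A.IsHermitian) (S : Finset ι) (c : ℝ)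
    (hS : ∀ j ∈ S, c ≤ hA.eigenvalues j) (v : EuclideanSpace ℝ ι)
    (hv : v ∈ Submodule.span ℝ ((↑hA.eigenvectorBasis) '' (S : Set ι))) :
    c * ‖v‖^2 ≤ (inner ℝ v (Matrix.toEuclideanLin A v) : ℝ) := by
  rw [inner_toEuclideanLin hA v, norm_sq_repr hA v, Finset.mul_sum]
  refine Finset.sum_le_sum fun j _ => ?_
  by_cases hj : j ∈ S
  · exact mul_le_mul_of_nonneg_right (hS j hj) (sq_nonneg _)
  · rw [repr_eq_zero_of_mem_span hA S v hv hj]; simp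

lemma quad_le {A : Matrix ι ι ℝ} (hA : A.IsHermitian) (S : Finset ι) (c : ℝ)
    (hS : ∀ j ∈ S, hA.eigenvalues j ≤ c) (v : EuclideanSpace ℝ ι)
    (hv : v ∈ Submodule.span ℝ ((↑hA.eigenvectorBasis) '' (S : Set ι))) :
    (inner ℝ v (Matrix.toEuclideanLin A v) : ℝ) ≤ c * ‖v‖^2 := by
  rw [inner_toEuclideanLin hA v, norm_sq_repr hA v, Finset.mul_sum]
  refine Finset.sum_le_sum fun j _ => ?_
  by_cases hj : j ∈ S
  · exact mul_le_mul_of_nonneg_right (hS j hj) (sq_nonneg _)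
  · rw [repr_eq_zero_of_mem_span hA S v hv hj]; simp

end Weyl

section Weyl2
variable {ι : Type*} [Fintype ι] [DecidableEq ι]

lemma eigDesc_le_smul {A B : Matrix ι ι ℝ} (hA : A.IsHermitian) (hB : B.IsHermitian)
    (c : ℝ) (hc : 0 ≤ c) (hPSD : (c • B - A).PosSemidef) (i : Fin (Fintype.card ι)) :
    eigDesc hA i ≤ c * eigDesc hB i := by
  classical
  set e := Fintype.equivFin ι with he
  set f := hA.eigenvalues ∘ e.symm with hfdef
  set g := hB.eigenvalues ∘ e.symm with hgdef
  set sA := Tuple.sort f with hsA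
  set sB := Tuple.sort g with hsB
  set SA : Finset ι := (Finset.Ici i.rev).image (fun p => e.symm (sA p)) with hSAdef
  set SB : Finset ι := (Finset.Iic i.rev).image (fun p => e.symm (sB p)) with hSBdef
  have hinjA : Function.Injective (fun p => e.symm (sA p)) :=
    e.symm.injective.comp sA.injective
  have hinjB : Function.Injective (fun p => e.symm (sB p)) :=
    e.symm.injective.comp sB.injective
  have hSAcard : SA.card = (i : ℕ) + 1 := by
    rw [hSAdef, Finset.card_image_of_injective _ hinjA, Fin.card_Ici, Fin.val_rev]
    omega
  have hSBcard : SB.card = Fintype.card ι - i := by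
    rw [hSBdef, Finset.card_image_of_injective _ hinjB, Fin.card_Iic, Fin.val_rev]
    omega
  have hAge : ∀ j ∈ SA, eigDesc hA i ≤ hA.eigenvalues j := by
    intro j hj
    rw [hSAdef, Finset.mem_image] at hj
    obtain ⟨p, hp, rfl⟩ := hj
    have : f (sA i.rev) ≤ f (sA p) := Tuple.monotone_sort f (Finset.mem_Ici.1 hp)
    simpa [eigDesc, hfdef] using this
  have hBle : ∀ j ∈ SB, hB.eigenvalues j ≤ eigDesc hB i := by
    intro j hj
    rw [hSBdef, Finset.mem_image] at hj
    obtain ⟨p, hp, rfl⟩ := hj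
    have : g (sB p) ≤ g (sB i.rev) := Tuple.monotone_sort g (Finset.mem_Iic.1 hp)
    simpa [eigDesc, hgdef] using this
  set E := Submodule.span ℝ ((↑hA.eigenvectorBasis) '' (SA : Set ι)) with hE
  set F := Submodule.span ℝ ((↑hB.eigenvectorBasis) '' (SB : Set ι)) with hF
  have hEcard : Module.finrank ℝ E = (i : ℕ) + 1 := by
    rw [hE, finrank_span_eigen, hSAcard]
  have hFcard : Module.finrank ℝ F = Fintype.card ι - i := by
    rw [hF, finrank_span_eigen, hSBcard]
  have hEF : E ⊓ F ≠ ⊥ := by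
    intro hbot
    have h1 := Submodule.finrank_sup_add_finrank_inf_eq E F
    rw [hbot, finrank_bot, hEcard, hFcard] at h1
    have h2 : Module.finrank ℝ ↥(E ⊔ F) ≤ Fintype.card ι := by
      simpa using Submodule.finrank_le (E ⊔ F)
    have := i.isLt
    omega
  obtain ⟨v, hvEF, hv0⟩ := Submodule.exists_mem_ne_zero_of_ne_bot hEF
  have hvE : v ∈ E := hvEF.1
  have hvF : v ∈ F := hvEF.2
  have h1 : eigDesc hA i * ‖v‖^2 ≤ (inner ℝ v (Matrix.toEuclideanLin A v) : ℝ) :=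
    quad_ge hA SA _ hAge v hvE
  have h2 : (inner ℝ v (Matrix.toEuclideanLin B v) : ℝ) ≤ eigDesc hB i * ‖v‖^2 :=
    quad_le hB SB _ hBle v hvF
  have h3 : (inner ℝ v (Matrix.toEuclideanLin A v) : ℝ)
      ≤ c * (inner ℝ v (Matrix.toEuclideanLin B v) : ℝ) := by
    have h4 := hPSD.dotProduct_mulVec_nonneg (WithLp.equiv 2 (ι → ℝ) v)
    have hArw : (inner ℝ v (Matrix.toEuclideanLin A v) : ℝ)
        = dotProduct (star (WithLp.equiv 2 (ι → ℝ) v)) (A *ᵥ (WithLp.equiv 2 (ι → ℝ) v)) := by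
      rw [EuclideanSpace.inner_eq_star_dotProduct, dotProduct_comm]; rfl
    have hBrw : (inner ℝ v (Matrix.toEuclideanLin B v) : ℝ)
        = dotProduct (star (WithLp.equiv 2 (ι → ℝ) v)) (B *ᵥ (WithLp.equiv 2 (ι → ℝ) v)) := by
      rw [EuclideanSpace.inner_eq_star_dotProduct, dotProduct_comm]; rfl
    rw [Matrix.sub_mulVec, Matrix.smul_mulVec, dotProduct_sub, dotProduct_smul,
      smul_eq_mul] at h4
    rw [hArw, hBrw]
    linarith
  have hv2 : (0:ℝ) < ‖v‖^2 := by
    have : 0 < ‖v‖ := norm_pos_iff.mpr hv0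
    positivity
  have := h1.trans (h3.trans (mul_le_mul_of_nonneg_left h2 hc))
  rw [← mul_assoc] at this
  exact le_of_mul_le_mul_right this hv2
end Weyl2

section Quad
variable {α β Ω : Type*} [Fintype α] [Fintype β] [Fintype Ω] [DecidableEq α]

lemma dot_vecMulVec (w y : α → ℝ) :
    y ⬝ᵥ (Matrix.vecMulVec w w *ᵥ y) = (∑ p, y p * w p)^2 := by
  simp only [dotProduct, mulVec, vecMulVec_apply, dotProduct]
  calc ∑ p, y p * ∑ q, (w p * w q) * y q
      = ∑ p, ∑ q, (y p * w p) * (y q * w q) := by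
        refine Finset.sum_congr rfl fun p _ => ?_
        rw [Finset.mul_sum]
        exact Finset.sum_congr rfl fun q _ => by ring
    _ = (∑ p, y p * w p) * (∑ q, y q * w q) := by rw [← Finset.sum_mul_sum]
    _ = _ := by rw [sq]

lemma dot_sum_smul_mulVec (μ : Ω → ℝ) (A : Ω → Matrix α α ℝ) (y : α → ℝ) :
    y ⬝ᵥ ((∑ ω, μ ω • A ω) *ᵥ y) = ∑ ω, μ ω * (y ⬝ᵥ (A ω *ᵥ y)) := by
  let l : Matrix α α ℝ →ₗ[ℝ] ℝ :=
    { toFun := fun S => y ⬝ᵥ (S *ᵥ y)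
      map_add' := fun S T => by
        rw [Matrix.add_mulVec, dotProduct_add]
      map_smul' := fun c S => by
        simp only [RingHom.id_apply, smul_eq_mul]
        rw [Matrix.smul_mulVec, dotProduct_smul, smul_eq_mul] }
  show l (∑ ω, μ ω • A ω) = ∑ ω, μ ω * l (A ω)
  rw [map_sum]
  exact Finset.sum_congr rfl fun ω _ => by rw [_root_.map_smul, smul_eq_mul]

lemma dot_one_kronecker (H : Matrix β β ℝ) (y : α × β → ℝ) :
    y ⬝ᵥ (((1 : Matrix α α ℝ) ⊗ₖ H) *ᵥ y)
      = ∑ r : α, (fun b => y (r, b)) ⬝ᵥ (H *ᵥ fun b => y (r, b)) := by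
  simp only [dotProduct, mulVec, dotProduct, kroneckerMap_apply, Matrix.one_apply,
    Fintype.sum_prod_type, ite_mul, one_mul, zero_mul]
  refine Finset.sum_congr rfl fun r _ => Finset.sum_congr rfl fun b _ => ?_
  congr 1
  calc (∑ x : α, ∑ x1 : β, if r = x then H b x1 * y (x, x1) else 0)
      = ∑ x : α, if r = x then ∑ x1 : β, H b x1 * y (x, x1) else 0 := by
        refine Finset.sum_congr rfl fun x _ => ?_
        split <;> simp
    _ = ∑ x1 : β, H b x1 * y (r, x1) := by rw [Finset.sum_ite_eq]; simp

lemma sum_sq_eq_norm_sq (w : α → ℝ) :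
    ∑ b, w b ^ 2 = ‖(EuclideanSpace.equiv α ℝ).symm w‖^2 := by
  rw [EuclideanSpace.norm_eq, Real.sq_sqrt (by positivity)]
  refine Finset.sum_congr rfl fun b _ => ?_
  simp [sq_abs]

end Quad

section OpN
lemma sum_sq_vecMul_le {m n : Type*} [Fintype m] [Fintype n] [DecidableEq m] [DecidableEq n]
    (A : Matrix m n ℝ) (u : m → ℝ) :
    ∑ b, (Matrix.vecMul u A b)^2 ≤ ‖A‖^2 * ∑ r, u r ^ 2 := by
  have h1 : Matrix.vecMul u A = Aᴴ *ᵥ u := by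
    rw [conjTranspose_eq_transpose_of_trivial, Matrix.mulVec_transpose]
  rw [h1, sum_sq_eq_norm_sq, sum_sq_eq_norm_sq]
  have h2 := Matrix.l2_opNorm_mulVec Aᴴ ((EuclideanSpace.equiv m ℝ).symm u)
  rw [Matrix.l2_opNorm_conjTranspose] at h2
  have h3 : Aᴴ *ᵥ ((EuclideanSpace.equiv m ℝ).symm u) = Aᴴ *ᵥ u := rfl
  rw [h3] at h2
  calc ‖(EuclideanSpace.equiv n ℝ).symm (Aᴴ *ᵥ u)‖^2
      ≤ (‖A‖ * ‖(EuclideanSpace.equiv m ℝ).symm u‖)^2 :=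
        pow_le_pow_left₀ (norm_nonneg _) h2 2
    _ = ‖A‖^2 * ‖(EuclideanSpace.equiv m ℝ).symm u‖^2 := by ring
end OpN

/-- for any logit `z_i` of a feedforward network, the correlation matrix of its
Jacobian w.r.t. the layer-`k` weights (with `∂z_i/∂wᵏ = ∂z_i/∂u^{k+1} ⊗ hᵏ`) satisfies
`E[(∂z_i/∂wᵏ)(∂z_i/∂wᵏ)ᵀ] ⪯ a^{2(L−k)} (∏_{j=k+1}^{L} ‖wʲ‖₂²) · I_{d(k+1)} ⊗ E[hᵏ hᵏᵀ]`
in the Loewner order; consequently its sorted eigenvalues are bounded entrywise by the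
constant times the sorted eigenvalues of `I ⊗ E[hᵏ hᵏᵀ]`. -/
theorem logit_jacobian_corr_loewner_le
    {Ω : Type*} [Fintype Ω] (μ : Ω → ℝ) (hμ : ∀ ω, 0 ≤ μ ω) (hμ1 : ∑ ω, μ ω = 1)
    (L : ℕ) (d : ℕ → ℕ)
    (W : (j : ℕ) → Matrix (Fin (d (j + 1))) (Fin (d j)) ℝ)
    (x : Ω → Fin (d 0) → ℝ)
    (σ : ℝ → ℝ) (a : ℝ) (ha : 0 ≤ a) (hσ0 : σ 0 = 0) (hσ : ∀ t : ℝ, |σ t| ≤ a * |t|)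
    (h : Ω → (k : ℕ) → Fin (d k) → ℝ)
    (hx : ∀ ω, h ω 0 = x ω)
    (hrec : ∀ ω, ∀ k < L, h ω (k + 1) = fun r => σ ((W k).mulVec (h ω k) r))
    (i : Fin (d (L + 1)))                                       -- the logit index
    (s : Ω → (k : ℕ) → Fin (d (k + 1)) → ℝ)                     -- σ'(u^{k+1})
    (hs : ∀ ω k r, |s ω k r| ≤ a)
    (gH : Ω → (k : ℕ) → Fin (d k) → ℝ)                          -- ∂z_i/∂h^k
    (hgHL : ∀ ω, gH ω L = fun b => W L i b)
    (hgH : ∀ ω, ∀ k < L,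
      gH ω k = Matrix.vecMul (fun r => gH ω (k + 1) r * s ω k r) (W k))
    (gU : Ω → (k : ℕ) → Fin (d (k + 1)) → ℝ)                    -- ∂z_i/∂u^{k+1}
    (hgUL : ∀ ω, gU ω L = Pi.single i 1)
    (hgU : ∀ ω, ∀ k < L, gU ω k = fun r => gH ω (k + 1) r * s ω k r)
    (k : ℕ) (hk : k ≤ L)
    -- `M` : the Jacobian correlation matrix, `K = I ⊗ E[hᵏ hᵏᵀ]`
    (M K : Matrix (Fin (d (k + 1)) × Fin (d k)) (Fin (d (k + 1)) × Fin (d k)) ℝ)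
    (hM : M = ∑ ω, μ ω • Matrix.vecMulVec
        (fun rb : Fin (d (k + 1)) × Fin (d k) => gU ω k rb.1 * h ω k rb.2)
        (fun rb : Fin (d (k + 1)) × Fin (d k) => gU ω k rb.1 * h ω k rb.2))
    (hK : K = (1 : Matrix (Fin (d (k + 1))) (Fin (d (k + 1))) ℝ) ⊗ₖ
        (∑ ω, μ ω • Matrix.vecMulVec (h ω k) (h ω k)))
    (hMh : M.IsHermitian) (hKh : K.IsHermitian) :
    ((a ^ (2 * (L - k)) * ∏ j ∈ Finset.Icc (k + 1) L, ‖W j‖ ^ 2) • K - M).PosSemidef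
    ∧ ∀ i', eigDesc hMh i' ≤
        (a ^ (2 * (L - k)) * ∏ j ∈ Finset.Icc (k + 1) L, ‖W j‖ ^ 2) * eigDesc hKh i' := by
  have key : ∀ n : ℕ, ∀ k', k' ≤ L → L - k' = n → ∀ ω,
      ∑ r, (gU ω k' r)^2 ≤ a ^ (2 * n) * ∏ j ∈ Finset.Icc (k' + 1) L, ‖W j‖ ^ 2 := by
    intro n
    induction n with
    | zero =>
      intro k' hk' hn ω
      have hkL : k' = L := by omega
      subst hkL
      rw [hgUL ω, Finset.Icc_eq_empty (by omega), Finset.prod_empty]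
      have : ∑ r, (Pi.single (M := fun _ => ℝ) i 1 r)^2 = 1 := by
        rw [Finset.sum_eq_single i]
        · simp
        · intro b _ hb; simp [Pi.single_apply, hb]
        · intro hb; exact absurd (Finset.mem_univ i) hb
      rw [this]
      simp
    | succ m ih =>
      intro k' hk' hn ω
      have hlt : k' < L := by omega
      have hgu : gU ω k' = fun r => gH ω (k' + 1) r * s ω k' r := hgU ω k' hlt
      have hvec : gH ω (k' + 1) = Matrix.vecMul (gU ω (k' + 1)) (W (k' + 1)) := by
        rcases eq_or_lt_of_le (Nat.succ_le_of_lt hlt) with h1 | h1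
        · subst h1
          rw [hgHL ω, hgUL ω, Matrix.single_vecMul]
          funext b; simp
        · rw [hgH ω (k' + 1) h1, hgU ω (k' + 1) h1]
      have hb1 : ∀ r, (gU ω k' r)^2 ≤ a^2 * (gH ω (k' + 1) r)^2 := by
        intro r
        rw [hgu]
        have h2 : (s ω k' r)^2 ≤ a^2 := by
          have := hs ω k' r
          nlinarith [abs_nonneg (s ω k' r), sq_abs (s ω k' r)]
        show (gH ω (k' + 1) r * s ω k' r)^2 ≤ _
        calc (gH ω (k' + 1) r * s ω k' r)^2
            = (gH ω (k' + 1) r)^2 * (s ω k' r)^2 := by ring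
          _ ≤ (gH ω (k' + 1) r)^2 * a^2 := mul_le_mul_of_nonneg_left h2 (sq_nonneg _)
          _ = a^2 * (gH ω (k' + 1) r)^2 := by ring
      calc ∑ r, (gU ω k' r)^2
          ≤ ∑ r, a^2 * (gH ω (k' + 1) r)^2 := Finset.sum_le_sum fun r _ => hb1 r
        _ = a^2 * ∑ b, (gH ω (k' + 1) b)^2 := by rw [Finset.mul_sum]
        _ ≤ a^2 * (‖W (k' + 1)‖^2 * ∑ r, (gU ω (k' + 1) r)^2) := by
            refine mul_le_mul_of_nonneg_left ?_ (by positivity)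
            rw [hvec]
            exact sum_sq_vecMul_le _ _
        _ ≤ a^2 * (‖W (k' + 1)‖^2 * (a^(2*m) * ∏ j ∈ Finset.Icc (k' + 2) L, ‖W j‖^2)) := by
            refine mul_le_mul_of_nonneg_left ?_ (by positivity)
            exact mul_le_mul_of_nonneg_left (ih (k' + 1) (by omega) (by omega) ω) (by positivity)
        _ = a^(2*(m+1)) * ∏ j ∈ Finset.Icc (k' + 1) L, ‖W j‖^2 := by
            rw [show Finset.Icc (k' + 1) L = Finset.Ico (k' + 1) (L + 1) from
                (Finset.Ico_add_one_right_eq_Icc _ _).symm,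
              Finset.prod_eq_prod_Ico_succ_bot (by omega),
              show Finset.Ico (k' + 2) (L + 1) = Finset.Icc (k' + 2) L from
                Finset.Ico_add_one_right_eq_Icc _ _]
            ring
  set cst := a ^ (2 * (L - k)) * ∏ j ∈ Finset.Icc (k + 1) L, ‖W j‖ ^ 2 with hcst
  have hc0 : 0 ≤ cst := by positivity
  have hgUk : ∀ ω, ∑ r, (gU ω k r)^2 ≤ cst := fun ω => key (L - k) k hk rfl ω
  have hherm : (cst • K - M).IsHermitian := by
    unfold Matrix.IsHermitian
    rw [Matrix.conjTranspose_sub, Matrix.conjTranspose_smul, hKh.eq, hMh.eq, star_trivial]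
  have hpsd : (cst • K - M).PosSemidef := by
    refine Matrix.PosSemidef.of_dotProduct_mulVec_nonneg hherm fun y => ?_
    have hy : star y = y := by funext p; simp
    rw [Matrix.sub_mulVec, dotProduct_sub, Matrix.smul_mulVec, dotProduct_smul,
      smul_eq_mul, hy]
    have hKq : y ⬝ᵥ (K *ᵥ y) = ∑ ω, μ ω * ∑ r, (∑ b, y (r, b) * h ω k b)^2 := by
      rw [hK, dot_one_kronecker]
      have hr : ∀ r : Fin (d (k + 1)),
          (fun b => y (r, b)) ⬝ᵥ ((∑ ω, μ ω • Matrix.vecMulVec (h ω k) (h ω k)) *ᵥ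
            (fun b => y (r, b)))
          = ∑ ω, μ ω * (∑ b, y (r, b) * h ω k b)^2 := by
        intro r
        rw [dot_sum_smul_mulVec]
        exact Finset.sum_congr rfl fun ω _ => by rw [dot_vecMulVec]
      rw [Finset.sum_congr rfl fun r _ => hr r, Finset.sum_comm]
      exact Finset.sum_congr rfl fun ω _ => (Finset.mul_sum _ _ _).symm
    have hMq : y ⬝ᵥ (M *ᵥ y)
        = ∑ ω, μ ω * (∑ p : Fin (d (k + 1)) × Fin (d k), y p * (gU ω k p.1 * h ω k p.2))^2 := by
      rw [hM, dot_sum_smul_mulVec]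
      exact Finset.sum_congr rfl fun ω _ => by rw [dot_vecMulVec]
    rw [hKq, hMq, Finset.mul_sum, sub_nonneg]
    refine Finset.sum_le_sum fun ω _ => ?_
    rw [← mul_assoc, mul_comm cst (μ ω), mul_assoc]
    refine mul_le_mul_of_nonneg_left ?_ (hμ ω)
    have hsplit : (∑ p : Fin (d (k + 1)) × Fin (d k), y p * (gU ω k p.1 * h ω k p.2))
        = ∑ r, gU ω k r * (∑ b, y (r, b) * h ω k b) := by
      rw [Fintype.sum_prod_type]
      refine Finset.sum_congr rfl fun r _ => ?_
      rw [Finset.mul_sum]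
      exact Finset.sum_congr rfl fun b _ => by ring
    rw [hsplit]
    calc (∑ r, gU ω k r * (∑ b, y (r, b) * h ω k b))^2
        ≤ (∑ r, (gU ω k r)^2) * ∑ r, (∑ b, y (r, b) * h ω k b)^2 :=
          Finset.sum_mul_sq_le_sq_mul_sq Finset.univ _ _
      _ ≤ cst * ∑ r, (∑ b, y (r, b) * h ω k b)^2 :=
          mul_le_mul_of_nonneg_right (hgUk ω) (by positivity)
  exact ⟨hpsd, fun i' => eigDesc_le_smul hMh hKh cst hc0 hpsd i'⟩
end

section
/- With the optimal posterior Σ_q^{-1} = 2(n−1)H + εI for a quadratic loss with Hessian H having eigenvalues λ_1 ≥ … ≥ λ_p ≥ 0, the excess expected loss equals E_{w'∼Q}[ℓ(w')] − ℓ(w) = (1/2) ∑_{i=1}^p λ_i / (2(n−1)λ_i + ε); moreover this is at most (p(n,ε) + 1/c)/(4(n−1)) whenever λ_i ≤ (ε/(2(n−1))) e^{−c(i − p(n,ε))} for all i > p(n,ε), where p(n,ε) = #{i : λ_i ≥ ε/(2(n−1))} and c > 0. -/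
open Matrix MeasureTheory

/-- Density of the multivariate Gaussian `N(μ, S)` on `ℝ^p`. -/
noncomputable def gaussianPdf {p : ℕ} (μ : Fin p → ℝ) (S : Matrix (Fin p) (Fin p) ℝ)
    (x : Fin p → ℝ) : ℝ :=
  (Real.sqrt ((2 * Real.pi) ^ p * S.det))⁻¹ *
    Real.exp (-(1 / 2) * ((x - μ) ⬝ᵥ S⁻¹.mulVec (x - μ)))

/-- KL divergence between the Gaussians `N(μq, Sq)` and `N(μp, Sp)` on `ℝ^p`,
`KL(Q,P) = ∫ q(w) log(q(w)/p(w)) dw`. -/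
noncomputable def klGauss {p : ℕ} (μq : Fin p → ℝ) (Sq : Matrix (Fin p) (Fin p) ℝ)
    (μp : Fin p → ℝ) (Sp : Matrix (Fin p) (Fin p) ℝ) : ℝ :=
  ∫ x : Fin p → ℝ,
    gaussianPdf μq Sq x * Real.log (gaussianPdf μq Sq x / gaussianPdf μp Sp x)

section auxiliary
open Real MeasureTheory Filter Set Topology Matrix

variable {p : ℕ}

lemma tendsto_mul_exp_neg_mul_sq_atTop' {b : ℝ} (hb : 0 < b) :
    Filter.Tendsto (fun x : ℝ => x * Real.exp (-b * x ^ 2)) atTop (nhds 0) := by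
  have h2 : Filter.Tendsto (fun x : ℝ => Real.exp (-(1/2) * x)) atTop (nhds 0) := by
    apply Real.tendsto_exp_atBot.comp
    exact Filter.Tendsto.const_mul_atTop_of_neg (by norm_num) tendsto_id
  have h := (rpow_mul_exp_neg_mul_sq_isLittleO_exp_neg hb 1).tendsto_zero_of_tendsto h2
  refine h.congr' ?_
  filter_upwards [eventually_gt_atTop (0:ℝ)] with x hx
  rw [Real.rpow_one]

lemma integrable_sq_mul_exp_neg_mul_sq {b : ℝ} (hb : 0 < b) :
    Integrable (fun x : ℝ => x ^ 2 * Real.exp (-b * x ^ 2)) := by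
  have := integrable_rpow_mul_exp_neg_mul_sq hb (s := 2) (by norm_num)
  refine this.congr (Filter.Eventually.of_forall fun x => ?_)
  norm_num [Real.rpow_natCast x 2]

lemma integral_sq_mul_exp_neg_mul_sq {b : ℝ} (hb : 0 < b) :
    ∫ x : ℝ, x ^ 2 * Real.exp (-b * x ^ 2) = Real.sqrt (π / b) / (2 * b) := by
  set φ : ℝ → ℝ := fun x => x * Real.exp (-b * x ^ 2) with hφ
  set φ' : ℝ → ℝ := fun x => Real.exp (-b * x ^ 2) - 2 * b * (x ^ 2 * Real.exp (-b * x ^ 2)) with hφ'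
  have hderiv : ∀ x : ℝ, HasDerivAt φ (φ' x) x := by
    intro x
    have h1 : HasDerivAt (fun x : ℝ => -b * x ^ 2) (-b * (2 * x)) x := by
      simpa using ((hasDerivAt_pow 2 x).const_mul (-b))
    have h : HasDerivAt (fun y : ℝ => id y * Real.exp (-b * y ^ 2)) _ x := (hasDerivAt_id x).mul h1.exp
    convert h using 1
    · rfl
    · simp only [hφ', id_eq]
      ring
  have E1 : Integrable (fun x : ℝ => Real.exp (-b * x ^ 2)) := integrable_exp_neg_mul_sq hb
  have E2 := integrable_sq_mul_exp_neg_mul_sq hb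
  have Eφ' : Integrable φ' := E1.sub (E2.const_mul (2*b))
  have htop : Filter.Tendsto φ atTop (nhds 0) := tendsto_mul_exp_neg_mul_sq_atTop' hb
  have hbot : Filter.Tendsto φ atBot (nhds 0) := by
    have := (htop.neg).comp tendsto_neg_atBot_atTop
    simp only [Function.comp_def, neg_zero] at this
    refine this.congr fun x => ?_
    simp only [hφ, Function.comp_apply]
    ring_nf
  have hcont : Continuous φ := by continuity
  have hIoi : ∫ x in Ioi (0:ℝ), φ' x = 0 - φ 0 :=
    integral_Ioi_of_hasDerivAt_of_tendsto hcont.continuousWithinAt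
      (fun x _ => hderiv x) Eφ'.integrableOn htop
  have hIic : ∫ x in Iic (0:ℝ), φ' x = φ 0 - 0 :=
    integral_Iic_of_hasDerivAt_of_tendsto hcont.continuousWithinAt
      (fun x _ => hderiv x) Eφ'.integrableOn hbot
  have hzero : ∫ x : ℝ, φ' x = 0 := by
    rw [← intervalIntegral.integral_Iic_add_Ioi Eφ'.integrableOn Eφ'.integrableOn, hIoi, hIic]; ring
  have hsplit : ∫ x : ℝ, φ' x
      = (∫ x : ℝ, Real.exp (-b * x ^ 2)) - 2 * b * ∫ x : ℝ, x ^ 2 * Real.exp (-b * x ^ 2) := by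
    rw [hφ']
    rw [integral_sub E1 (E2.const_mul (2*b)), integral_const_mul]
  rw [hsplit, integral_gaussian] at hzero
  have : (2*b) ≠ 0 := by positivity
  field_simp at hzero ⊢
  linarith

lemma det_abs_one {U : Matrix (Fin p) (Fin p) ℝ} (hU : U * U.transpose = 1) :
    |U.det| = 1 := by
  have h : U.det * U.det = 1 := by
    have := congrArg Matrix.det hU
    rwa [Matrix.det_mul, Matrix.det_transpose, Matrix.det_one] at this
  rcases mul_self_eq_one_iff.mp h with h1 | h1 <;> simp [h1]

lemma integral_comp_orth_add (w : Fin p → ℝ) (U : Matrix (Fin p) (Fin p) ℝ)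
    (hU : U * U.transpose = 1) (f : (Fin p → ℝ) → ℝ) :
    ∫ x : Fin p → ℝ, f x = ∫ y : Fin p → ℝ, f (w + U.mulVec y) := by
  have hU' : U.transpose * U = 1 := mul_eq_one_comm.mp hU
  have hdet : U.det ≠ 0 := by
    have := det_abs_one hU; intro h; rw [h] at this; simp at this
  let L : (Fin p → ℝ) ≃ₗ[ℝ] (Fin p → ℝ) :=
    LinearEquiv.ofLinear (Matrix.toLin' U) (Matrix.toLin' U.transpose)
      (by rw [← Matrix.toLin'_mul, hU, Matrix.toLin'_one])
      (by rw [← Matrix.toLin'_mul, hU', Matrix.toLin'_one])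
  let e₀ : (Fin p → ℝ) ≃ᵐ (Fin p → ℝ) :=
    L.toContinuousLinearEquiv.toHomeomorph.toMeasurableEquiv
  have hmap : Measure.map (⇑e₀) volume = volume := by
    have : (⇑e₀ : (Fin p → ℝ) → (Fin p → ℝ)) = ⇑(Matrix.toLin' U) := rfl
    rw [this, Real.map_matrix_volume_pi_eq_smul_volume_pi hdet]
    rw [abs_inv, det_abs_one hU]
    simp
  have hmp : MeasurePreserving (⇑e₀) volume volume := ⟨e₀.measurable, hmap⟩
  have hadd : MeasurePreserving (fun z : Fin p → ℝ => w + z) volume volume :=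
    measurePreserving_add_left volume w
  have he : ∀ y, e₀ y = U.mulVec y := fun y => Matrix.toLin'_apply U y
  have hfun : (fun y : Fin p → ℝ => w + U.mulVec y)
      = ⇑(e₀.trans (MeasurableEquiv.addLeft w)) := by
    funext y
    show w + U.mulVec y = w + e₀ y
    rw [he]
  have hT : MeasurePreserving (fun y : Fin p → ℝ => w + U.mulVec y) volume volume := by
    have h := hadd.comp hmp
    refine ⟨by rw [hfun]; exact (e₀.trans (MeasurableEquiv.addLeft w)).measurable, ?_⟩
    have : (fun y : Fin p → ℝ => w + U.mulVec y)
        = (fun z : Fin p → ℝ => w + z) ∘ ⇑e₀ := by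
      funext y; simp [Function.comp, he]
    rw [this]
    exact h.map_eq
  have hemb : MeasurableEmbedding (fun y : Fin p → ℝ => w + U.mulVec y) := by
    rw [hfun]
    exact (e₀.trans (MeasurableEquiv.addLeft w)).measurableEmbedding
  exact (hT.integral_comp hemb f).symm

lemma quad_form_eq (U : Matrix (Fin p) (Fin p) ℝ)
    (hU' : U.transpose * U = 1) (d : Fin p → ℝ) (y : Fin p → ℝ) :
    (U.mulVec y) ⬝ᵥ (U * Matrix.diagonal d * U.transpose).mulVec (U.mulVec y)
      = ∑ i, d i * y i ^ 2 := by
  rw [Matrix.mulVec_mulVec, Matrix.mul_assoc, Matrix.mul_assoc, hU', Matrix.mul_one]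
  rw [← Matrix.mulVec_mulVec, Matrix.dotProduct_mulVec]
  have hv : (U.mulVec y) ᵥ* U = y := by
    rw [← Matrix.mulVec_transpose]
    rw [Matrix.mulVec_mulVec, hU', Matrix.one_mulVec]
  rw [hv]
  simp [dotProduct, Matrix.mulVec_diagonal]
  exact Finset.sum_congr rfl fun i _ => by ring


variable {p : ℕ}

lemma UDU_mul (U : Matrix (Fin p) (Fin p) ℝ) (hU' : U.transpose * U = 1)
    (d e : Fin p → ℝ) :
    (U * Matrix.diagonal d * U.transpose) * (U * Matrix.diagonal e * U.transpose)
      = U * Matrix.diagonal (fun i => d i * e i) * U.transpose := by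
  have h : U * Matrix.diagonal d * U.transpose * (U * Matrix.diagonal e * U.transpose)
      = U * (Matrix.diagonal d * ((U.transpose * U) * (Matrix.diagonal e * U.transpose))) := by
    simp only [Matrix.mul_assoc]
  rw [h, hU', Matrix.one_mul, ← Matrix.mul_assoc (Matrix.diagonal d),
    Matrix.diagonal_mul_diagonal, ← Matrix.mul_assoc]

lemma part1 (a lam : Fin p → ℝ) (hapos : ∀ i, 0 < a i)
    (w : Fin p → ℝ) (U : Matrix (Fin p) (Fin p) ℝ) (hU : U * U.transpose = 1)
    (Sq : Matrix (Fin p) (Fin p) ℝ)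
    (hSq : Sq = U * Matrix.diagonal (fun i => (a i)⁻¹) * U.transpose) (ℓw : ℝ) :
    ∫ x : Fin p → ℝ, gaussianPdf w Sq x *
        (ℓw + (1 / 2) * ((x - w) ⬝ᵥ (U * Matrix.diagonal lam * U.transpose).mulVec (x - w)))
      = ℓw + (1 / 2) * ∑ i, lam i / a i := by
  have hU' : U.transpose * U = 1 := mul_eq_one_comm.mp hU
  have hane : ∀ i, a i ≠ 0 := fun i => (hapos i).ne'
  -- inverse and determinant of Sq
  have hSqinv : Sq⁻¹ = U * Matrix.diagonal a * U.transpose := by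
    apply Matrix.inv_eq_right_inv
    rw [hSq, UDU_mul U hU']
    have : (fun i => (a i)⁻¹ * a i) = fun _ => (1:ℝ) :=
      funext fun i => inv_mul_cancel₀ (hane i)
    rw [this, Matrix.diagonal_one, Matrix.mul_one, hU]
  have hUU : U.det * U.det = 1 := by
    have := congrArg Matrix.det hU
    rwa [Matrix.det_mul, Matrix.det_transpose, Matrix.det_one] at this
  have hdetSq : Sq.det = ∏ i, (a i)⁻¹ := by
    rw [hSq, Matrix.det_mul, Matrix.det_mul, Matrix.det_transpose, Matrix.det_diagonal]
    linear_combination (∏ i, (a i)⁻¹) * hUU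
  -- 1D pieces
  set s : Fin p → ℝ := fun j => Real.sqrt (π / (a j / 2)) with hs
  have hspos : ∀ j, 0 < s j := fun j =>
    Real.sqrt_pos.mpr (div_pos pi_pos (by linarith [hapos j]))
  set Z : ℝ := Real.sqrt ((2 * π) ^ p * ∏ i, (a i)⁻¹) with hZdef
  have hZ : Z = ∏ j, s j := by
    have h1 : (2 * π) ^ p * ∏ i, (a i)⁻¹ = ∏ j, (π / (a j / 2)) := by
      rw [show (fun j => π / (a j / 2)) = fun j => (2 * π) * (a j)⁻¹ from
        funext fun j => by field_simp]
      rw [Finset.prod_mul_distrib, Finset.prod_const, Finset.card_univ, Fintype.card_fin]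
    have h2 : (∏ j, s j) ^ 2 = ∏ j, (π / (a j / 2)) := by
      rw [← Finset.prod_pow]
      exact Finset.prod_congr rfl fun j _ =>
        Real.sq_sqrt (le_of_lt (div_pos pi_pos (by linarith [hapos j])))
    rw [hZdef, h1, ← h2, Real.sqrt_sq (Finset.prod_nonneg fun j _ => (hspos j).le)]
  have hZpos : 0 < Z := by
    rw [hZ]; exact Finset.prod_pos fun j _ => hspos j
  -- change of variables
  rw [integral_comp_orth_add w U hU]
  -- pointwise rewriting of the integrand
  have hint : ∀ y : Fin p → ℝ,
      gaussianPdf w Sq (w + U.mulVec y) *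
        (ℓw + (1 / 2) * ((w + U.mulVec y - w) ⬝ᵥ
          (U * Matrix.diagonal lam * U.transpose).mulVec (w + U.mulVec y - w)))
      = (Z⁻¹ * ℓw) * ∏ j, Real.exp (-(a j / 2) * (y j) ^ 2)
        + ∑ i, (Z⁻¹ * (lam i / 2)) *
            ∏ j, ((if j = i then (y j) ^ 2 else 1) * Real.exp (-(a j / 2) * (y j) ^ 2)) := by
    intro y
    have hsub : w + U.mulVec y - w = U.mulVec y := add_sub_cancel_left w _
    rw [gaussianPdf, hsub, hSqinv, quad_form_eq U hU' a y, hdetSq, quad_form_eq U hU' lam y]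
    have hexp : Real.exp (-(1/2) * ∑ i, a i * y i ^ 2)
        = ∏ j, Real.exp (-(a j / 2) * (y j) ^ 2) := by
      rw [← Real.exp_sum]
      congr 1
      rw [Finset.mul_sum]
      exact Finset.sum_congr rfl fun i _ => by ring
    have hprodF : ∀ i, (∏ j, ((if j = i then (y j) ^ 2 else 1) *
        Real.exp (-(a j / 2) * (y j) ^ 2)))
        = y i ^ 2 * ∏ j, Real.exp (-(a j / 2) * (y j) ^ 2) := by
      intro i
      rw [Finset.prod_mul_distrib, Finset.prod_ite_eq']
      simp
    rw [hexp]
    rw [show (∑ i, (Z⁻¹ * (lam i / 2)) * ∏ j, ((if j = i then (y j) ^ 2 else 1) *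
        Real.exp (-(a j / 2) * (y j) ^ 2)))
      = ∑ i, (Z⁻¹ * (lam i / 2)) * (y i ^ 2 * ∏ j, Real.exp (-(a j / 2) * (y j) ^ 2)) from
      Finset.sum_congr rfl fun i _ => by rw [hprodF i]]
    set P := ∏ j, Real.exp (-(a j / 2) * (y j) ^ 2)
    have : ∑ i, (Z⁻¹ * (lam i / 2)) * (y i ^ 2 * P)
        = (Z⁻¹ * P) * ((1/2) * ∑ i, lam i * y i ^ 2) := by
      simp only [Finset.mul_sum]
      exact Finset.sum_congr rfl fun i _ => by ring
    rw [this]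
    ring
  simp only [hint]
  -- integrability
  have Eg : ∀ j, Integrable (fun x : ℝ => Real.exp (-(a j / 2) * x ^ 2)) := fun j =>
    integrable_exp_neg_mul_sq (by linarith [hapos j])
  have EF : ∀ i j : Fin p, Integrable
      (fun x : ℝ => (if j = i then x ^ 2 else 1) * Real.exp (-(a j / 2) * x ^ 2)) := by
    intro i j
    by_cases h : j = i
    · simp only [if_pos h]
      exact integrable_sq_mul_exp_neg_mul_sq (by linarith [hapos j])
    · simp only [if_neg h, one_mul]
      exact Eg j
  have PG : Integrable (fun y : Fin p → ℝ => ∏ j, Real.exp (-(a j / 2) * (y j) ^ 2)) :=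
    Integrable.fintype_prod (𝕜 := ℝ) Eg
  have PF : ∀ i, Integrable (fun y : Fin p → ℝ =>
      ∏ j, ((if j = i then (y j) ^ 2 else 1) * Real.exp (-(a j / 2) * (y j) ^ 2))) := fun i =>
    Integrable.fintype_prod (𝕜 := ℝ) (EF i)
  -- split the integral
  rw [integral_add ((PG.const_mul _))
    (integrable_finset_sum _ fun i _ => (PF i).const_mul _),
    integral_finset_sum _ fun i _ => (PF i).const_mul _]
  simp only [integral_const_mul]
  -- compute the product integrals
  have hIG : ∫ y : Fin p → ℝ, ∏ j, Real.exp (-(a j / 2) * (y j) ^ 2) = ∏ j, s j := by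
    rw [MeasureTheory.integral_fintype_prod_volume_eq_prod (f := fun j (x : ℝ) =>
      Real.exp (-(a j / 2) * x ^ 2))]
    exact Finset.prod_congr rfl fun j _ => integral_gaussian _
  have hIF : ∀ i, ∫ y : Fin p → ℝ,
      ∏ j, ((if j = i then (y j) ^ 2 else 1) * Real.exp (-(a j / 2) * (y j) ^ 2))
      = (∏ j, s j) * (a i)⁻¹ := by
    intro i
    rw [MeasureTheory.integral_fintype_prod_volume_eq_prod (f := fun j (x : ℝ) =>
      (if j = i then x ^ 2 else 1) * Real.exp (-(a j / 2) * x ^ 2))]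
    have hval : ∀ j, (∫ x : ℝ, (if j = i then x ^ 2 else 1) * Real.exp (-(a j / 2) * x ^ 2))
        = s j * (if j = i then (a j)⁻¹ else 1) := by
      intro j
      by_cases h : j = i
      · simp only [if_pos h]
        rw [integral_sq_mul_exp_neg_mul_sq (by linarith [hapos j])]
        rw [show 2 * (a j / 2) = a j by ring, hs]
        ring
      · simp only [if_neg h, one_mul, mul_one]
        exact integral_gaussian _
    rw [Finset.prod_congr rfl fun j _ => hval j, Finset.prod_mul_distrib,
      Finset.prod_ite_eq']
    simp
  rw [hIG]
  rw [Finset.sum_congr rfl fun i _ => by rw [hIF i]]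
  rw [← hZ]
  have hZne : Z ≠ 0 := hZpos.ne'
  have hz1 : Z⁻¹ * Z = 1 := inv_mul_cancel₀ hZne
  have : ∑ i, Z⁻¹ * (lam i / 2) * (Z * (a i)⁻¹) = (1/2) * ∑ i, lam i / a i := by
    simp only [Finset.mul_sum]
    refine Finset.sum_congr rfl fun i _ => ?_
    linear_combination (lam i / 2 * (a i)⁻¹) * hz1
  rw [this]
  linear_combination ℓw * hz1



lemma geom_tail_le {c : ℝ} (hc : 0 < c) (N : ℕ) :
    ∑ k ∈ Finset.Icc 1 N, Real.exp (-c) ^ k ≤ 1 / c := by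
  set r := Real.exp (-c) with hr
  have hr0 : 0 < r := Real.exp_pos _
  have hr1 : r < 1 := by
    rw [hr, Real.exp_lt_one_iff]; linarith
  have hge : ∑ k ∈ Finset.Icc 1 N, r ^ k = r * ∑ k ∈ Finset.range N, r ^ k := by
    rw [Finset.mul_sum, ← Finset.Ico_add_one_right_eq_Icc, Finset.sum_Ico_eq_sum_range]
    simp only [Nat.add_sub_cancel]
    exact Finset.sum_congr rfl fun k _ => by rw [pow_add, pow_one]
  have hgeom : ∑ k ∈ Finset.range N, r ^ k ≤ 1 / (1 - r) := by
    rw [geom_sum_eq hr1.ne,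
      show (r ^ N - 1) / (r - 1) = (1 - r ^ N) / (1 - r) by rw [← neg_div_neg_eq]; ring_nf]
    have h0 : 0 ≤ r ^ N := le_of_lt (pow_pos hr0 N)
    gcongr
    · linarith
  have h2 : r * (1 / (1 - r)) ≤ 1 / c := by
    rw [show r * (1 / (1 - r)) = r / (1 - r) by ring,
      div_le_div_iff₀ (by linarith) hc]
    have h3 : r * Real.exp c = 1 := by rw [hr, ← Real.exp_add]; simp
    have h4 := Real.add_one_le_exp c
    nlinarith
  calc ∑ k ∈ Finset.Icc 1 N, r ^ k = r * ∑ k ∈ Finset.range N, r ^ k := hge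
    _ ≤ r * (1 / (1 - r)) := by apply mul_le_mul_of_nonneg_left hgeom hr0.le
    _ ≤ 1 / c := h2

lemma part2 {p : ℕ} (m ε c : ℝ) (hm : 0 < m) (hε : 0 < ε) (hc : 0 < c)
    (lam : Fin p → ℝ) (hnn : ∀ i, 0 ≤ lam i) (pne : ℕ)
    (hdecay : ∀ i : Fin p, pne ≤ (i : ℕ) →
        lam i ≤ ε / m * Real.exp (-c * (((i : ℕ) : ℝ) + 1 - pne))) :
    ∑ i, lam i / (m * lam i + ε) ≤ ((pne : ℝ) + 1 / c) / m := by
  have hapos : ∀ i, 0 < m * lam i + ε := fun i => by nlinarith [hnn i]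
  rw [← Finset.sum_filter_add_sum_filter_not Finset.univ (fun i : Fin p => (i : ℕ) < pne)]
  have hb1 : ∑ i ∈ Finset.univ.filter (fun i : Fin p => (i : ℕ) < pne),
      lam i / (m * lam i + ε) ≤ (pne : ℝ) / m := by
    have hcard : (Finset.univ.filter (fun i : Fin p => (i : ℕ) < pne)).card ≤ pne := by
      have h := Finset.card_le_card_of_injOn
        (s := Finset.univ.filter (fun i : Fin p => (i : ℕ) < pne)) (t := Finset.range pne)
        (fun i : Fin p => (i : ℕ))
        (fun i hi => by
          rw [Finset.mem_coe, Finset.mem_filter] at hi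
          exact Finset.mem_range.mpr hi.2)
        (Fin.val_injective.injOn)
      rwa [Finset.card_range] at h
    calc ∑ i ∈ Finset.univ.filter (fun i : Fin p => (i : ℕ) < pne), lam i / (m * lam i + ε)
        ≤ ∑ _i ∈ Finset.univ.filter (fun i : Fin p => (i : ℕ) < pne), 1 / m := by
          refine Finset.sum_le_sum fun i _ => ?_
          rw [div_le_div_iff₀ (hapos i) hm]
          nlinarith [hnn i]
      _ = (Finset.univ.filter (fun i : Fin p => (i : ℕ) < pne)).card * (1 / m) := by
          rw [Finset.sum_const, nsmul_eq_mul]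
      _ ≤ (pne : ℝ) * (1 / m) := by
          apply mul_le_mul_of_nonneg_right _ (by positivity)
          exact_mod_cast hcard
      _ = (pne : ℝ) / m := by ring
  have hb2 : ∑ i ∈ Finset.univ.filter (fun i : Fin p => ¬ (i : ℕ) < pne),
      lam i / (m * lam i + ε) ≤ (1 / c) / m := by
    have step : ∀ i ∈ Finset.univ.filter (fun i : Fin p => ¬ (i : ℕ) < pne),
        lam i / (m * lam i + ε) ≤ Real.exp (-c) ^ ((i : ℕ) + 1 - pne) / m := by
      intro i hi
      simp only [Finset.mem_filter, not_lt] at hi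
      have hki : pne ≤ (i : ℕ) := hi.2
      have hcast : (-c) * (((i : ℕ) : ℝ) + 1 - pne) = (((i : ℕ) + 1 - pne : ℕ) : ℝ) * (-c) := by
        push_cast [Nat.cast_sub (by omega : pne ≤ (i : ℕ) + 1)]
        ring
      have hexp : Real.exp (-c * (((i : ℕ) : ℝ) + 1 - pne))
          = Real.exp (-c) ^ ((i : ℕ) + 1 - pne) := by
        rw [hcast, Real.exp_nat_mul]
      have h1 : lam i / (m * lam i + ε) ≤ lam i / ε := by
        gcongr
        · exact hnn i
        · nlinarith [hnn i]
      have h2 : lam i / ε ≤ (ε / m * Real.exp (-c * (((i : ℕ) : ℝ) + 1 - pne))) / ε := by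
        gcongr
        exact hdecay i hki
      have h3 : (ε / m * Real.exp (-c * (((i : ℕ) : ℝ) + 1 - pne))) / ε
          = Real.exp (-c * (((i : ℕ) : ℝ) + 1 - pne)) / m := by
        field_simp
      calc lam i / (m * lam i + ε) ≤ lam i / ε := h1
        _ ≤ (ε / m * Real.exp (-c * (((i : ℕ) : ℝ) + 1 - pne))) / ε := h2
        _ = Real.exp (-c * (((i : ℕ) : ℝ) + 1 - pne)) / m := h3
        _ = Real.exp (-c) ^ ((i : ℕ) + 1 - pne) / m := by rw [hexp]
    have hsum : ∑ i ∈ Finset.univ.filter (fun i : Fin p => ¬ (i : ℕ) < pne),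
        Real.exp (-c) ^ ((i : ℕ) + 1 - pne) ≤ 1 / c := by
      have hinj : Set.InjOn (fun i : Fin p => (i : ℕ) + 1 - pne)
          (Finset.univ.filter (fun i : Fin p => ¬ (i : ℕ) < pne)) := by
        intro i hi j hj h
        rw [Finset.mem_coe, Finset.mem_filter] at hi hj
        rw [not_lt] at hi hj
        have h' : (i : ℕ) + 1 - pne = (j : ℕ) + 1 - pne := h
        have h2 := hi.2
        have h3 := hj.2
        exact Fin.ext (by omega)
      have himg := Finset.sum_image
        (s := Finset.univ.filter (fun i : Fin p => ¬ (i : ℕ) < pne))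
        (g := fun i : Fin p => (i : ℕ) + 1 - pne)
        (f := fun k : ℕ => Real.exp (-c) ^ k)
        (fun x hx y hy h => hinj (Finset.mem_coe.mpr hx) (Finset.mem_coe.mpr hy) h)
      rw [← himg]
      refine le_trans (Finset.sum_le_sum_of_subset_of_nonneg ?_
        (fun k _ _ => by positivity)) (geom_tail_le hc p)
      intro k hk
      simp only [Finset.mem_image, Finset.mem_filter, Finset.mem_univ, true_and, not_lt] at hk
      obtain ⟨i, hi, rfl⟩ := hk
      simp only [Finset.mem_Icc]
      have := i.isLt
      omega
    calc ∑ i ∈ Finset.univ.filter (fun i : Fin p => ¬ (i : ℕ) < pne), lam i / (m * lam i + ε)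
        ≤ ∑ i ∈ Finset.univ.filter (fun i : Fin p => ¬ (i : ℕ) < pne),
            Real.exp (-c) ^ ((i : ℕ) + 1 - pne) / m := Finset.sum_le_sum step
      _ = (∑ i ∈ Finset.univ.filter (fun i : Fin p => ¬ (i : ℕ) < pne),
            Real.exp (-c) ^ ((i : ℕ) + 1 - pne)) / m := by rw [Finset.sum_div]
      _ ≤ (1 / c) / m := by
          gcongr
  have hfin : ((pne : ℝ) + 1 / c) / m = (pne : ℝ) / m + (1 / c) / m := by ring
  rw [hfin]
  linarith

end auxiliary

/-- with the optimal posterior `Σq = U diag(1/(2(n−1)λᵢ+ε)) Uᵀ` for a quadratic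
loss with Hessian `H = U diag(λ) Uᵀ ⪰ 0` (eigenvalues `λ₁ ≥ … ≥ λ_p ≥ 0`, 0-indexed here),
the excess expected loss equals `E_{w'∼Q}[ℓ(w')] − ℓ(w) = ½ ∑ᵢ λᵢ/(2(n−1)λᵢ+ε)`; moreover,
under the sloppy decay `λᵢ ≤ (ε/(2(n−1))) e^{−c(i − p(n,ε))}` for `i > p(n,ε)` (1-based),
where `p(n,ε) = #{i : λᵢ ≥ ε/(2(n−1))}` and `c > 0`, this is at most
`(p(n,ε) + 1/c)/(4(n−1))`. -/



theorem excess_expected_loss_optimal_posterior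
    {p : ℕ} (n : ℕ) (hn : 2 ≤ n) (ε : ℝ) (hε : 0 < ε) (c : ℝ) (hc : 0 < c)
    (w : Fin p → ℝ)
    (lam : Fin p → ℝ) (hanti : Antitone lam) (hnn : ∀ i, 0 ≤ lam i)
    (U : Matrix (Fin p) (Fin p) ℝ) (hU : U * U.transpose = 1)
    (H : Matrix (Fin p) (Fin p) ℝ) (hH : H = U * Matrix.diagonal lam * U.transpose)
    (Sq : Matrix (Fin p) (Fin p) ℝ)
    (hSq : Sq = U * Matrix.diagonal (fun i => (2 * ((n : ℝ) - 1) * lam i + ε)⁻¹) *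
        U.transpose)
    (ℓw : ℝ) (ℓ : (Fin p → ℝ) → ℝ)
    (hℓ : ℓ = fun x => ℓw + (1 / 2) * ((x - w) ⬝ᵥ H.mulVec (x - w)))
    (pne : ℕ)
    (hpne : pne = (Finset.univ.filter fun i : Fin p => ε / (2 * ((n : ℝ) - 1)) ≤ lam i).card)
    (hdecay : ∀ i : Fin p, pne ≤ (i : ℕ) →
        lam i ≤ ε / (2 * ((n : ℝ) - 1)) * Real.exp (-c * (((i : ℕ) : ℝ) + 1 - pne))) :
    ((∫ x : Fin p → ℝ, gaussianPdf w Sq x * ℓ x) - ℓw =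
        (1 / 2) * ∑ i, lam i / (2 * ((n : ℝ) - 1) * lam i + ε))
    ∧ (1 / 2) * (∑ i, lam i / (2 * ((n : ℝ) - 1) * lam i + ε)) ≤
        ((pne : ℝ) + 1 / c) / (4 * ((n : ℝ) - 1)) := by
  have hn2 : (2:ℝ) ≤ (n:ℝ) := by exact_mod_cast hn
  have hmpos : (0:ℝ) < 2 * ((n:ℝ) - 1) := by linarith
  constructor
  · have h1 : ∫ x : Fin p → ℝ, gaussianPdf w Sq x *
        (ℓw + (1 / 2) * ((x - w) ⬝ᵥ (U * Matrix.diagonal lam * U.transpose).mulVec (x - w)))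
        = ℓw + (1 / 2) * ∑ i, lam i / (2 * ((n:ℝ) - 1) * lam i + ε) :=
      part1 (fun i => 2 * ((n:ℝ) - 1) * lam i + ε) lam (fun i => by
        show (0:ℝ) < 2 * ((n:ℝ) - 1) * lam i + ε
        nlinarith [hnn i])
        w U hU Sq hSq ℓw
    simp only [hℓ, hH]
    rw [h1, add_sub_cancel_left]
  · have h2 : ∑ i, lam i / (2 * ((n:ℝ) - 1) * lam i + ε)
        ≤ ((pne : ℝ) + 1 / c) / (2 * ((n:ℝ) - 1)) :=
      part2 (2 * ((n:ℝ) - 1)) ε c hmpos hε hc lam hnn pne hdecay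
    have h3 : (1/2) * (((pne:ℝ)+1/c) / (2 * ((n:ℝ)-1))) = ((pne:ℝ)+1/c) / (4 * ((n:ℝ)-1)) := by
      have h4 : ((n:ℝ)-1) ≠ 0 := by linarith
      have h5 : c ≠ 0 := hc.ne'
      field_simp
      ring
    linarith
end

section
/- If A ∈ ℝ^{p×p} and B ∈ ℝ^{q×q} are symmetric positive semi-definite with eigenvalues (sorted descending) λ_i(A) ≤ e^{−c_1 i} and λ_j(B) ≤ e^{−c_2 j} for constants c_1, c_2 > 0, then the k-th largest eigenvalue of the Kronecker product A ⊗ B is at most e^{−min(c_1,c_2)√k}. -/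
open scoped Kronecker
open Matrix

open Polynomial

-- charpoly is invariant under conjugation
lemma my_charpoly_conj {n R : Type*} [CommRing R] [Fintype n] [DecidableEq n]
    (U M V : Matrix n n R) (h : U * V = 1) :
    (U * M * V).charpoly = M.charpoly := by
  have key : charmatrix (U * M * V) =
      (C : R →+* R[X]).mapMatrix U * charmatrix M * (C : R →+* R[X]).mapMatrix V := by
    rw [charmatrix, charmatrix, mul_sub, sub_mul]
    congr 1
    · rw [← (scalar_commute (X : R[X]) (fun r' => Commute.all _ _) _).eq, mul_assoc,
        ← _root_.map_mul, h, _root_.map_one, mul_one]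
    · rw [_root_.map_mul, _root_.map_mul]
  have hUV : (C : R →+* R[X]).mapMatrix U * (C : R →+* R[X]).mapMatrix V = 1 := by
    rw [← _root_.map_mul, h, _root_.map_one]
  rw [Matrix.charpoly, key, det_mul, det_mul, mul_right_comm, ← det_mul, hUV,
    det_one, one_mul]
  rfl

lemma my_charpoly_diagonal {n R : Type*} [CommRing R] [Fintype n] [DecidableEq n]
    (d : n → R) : (diagonal d).charpoly = ∏ i, (X - C (d i)) := by
  have : charmatrix (diagonal d) = diagonal fun i => (X : R[X]) - C (d i) := by
    ext i j
    rcases eq_or_ne i j with rfl | hij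
    · simp [charmatrix_apply]
    · simp [charmatrix_apply, diagonal_apply_ne _ hij, hij]
  rw [Matrix.charpoly, this, det_diagonal]

-- charpoly of a Hermitian real matrix is the product of linear factors of eigenvalues
lemma my_charpoly_hermitian {n : Type*} [Fintype n] [DecidableEq n]
    {M : Matrix n n ℝ} (hM : M.IsHermitian) :
    M.charpoly = ∏ i, (X - C (hM.eigenvalues i)) := by
  conv_lhs => rw [hM.spectral_theorem, Unitary.conjStarAlgAut_apply]
  rw [my_charpoly_conj _ _ _ ((Matrix.mem_unitaryGroup_iff).mp (hM.eigenvectorUnitary).2)]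
  have : (RCLike.ofReal ∘ hM.eigenvalues : n → ℝ) = hM.eigenvalues := by
    ext i; simp
  rw [this, my_charpoly_diagonal]

lemma my_charpoly_kron {p q : ℕ} {A : Matrix (Fin p) (Fin p) ℝ} {B : Matrix (Fin q) (Fin q) ℝ}
    (hA : A.IsHermitian) (hB : B.IsHermitian) :
    (A ⊗ₖ B).charpoly
      = ∏ x : Fin p × Fin q, (X - C (hA.eigenvalues x.1 * hB.eigenvalues x.2)) := by
  conv_lhs => rw [hA.spectral_theorem, hB.spectral_theorem, Unitary.conjStarAlgAut_apply,
    Unitary.conjStarAlgAut_apply]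
  rw [Matrix.mul_kronecker_mul, Matrix.mul_kronecker_mul,
    my_charpoly_conj _ _ _ (by
      rw [← Matrix.mul_kronecker_mul, (Matrix.mem_unitaryGroup_iff).mp hA.eigenvectorUnitary.2,
        (Matrix.mem_unitaryGroup_iff).mp hB.eigenvectorUnitary.2, Matrix.one_kronecker_one]),
    show ((RCLike.ofReal ∘ hA.eigenvalues : Fin p → ℝ)) = hA.eigenvalues from funext fun i => by simp,
    show ((RCLike.ofReal ∘ hB.eigenvalues : Fin q → ℝ)) = hB.eigenvalues from funext fun i => by simp,
    Matrix.diagonal_kronecker_diagonal, my_charpoly_diagonal]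

lemma my_multiset_eq {p q : ℕ} {A : Matrix (Fin p) (Fin p) ℝ} {B : Matrix (Fin q) (Fin q) ℝ}
    (hA : A.IsHermitian) (hB : B.IsHermitian) (hAB : (A ⊗ₖ B).IsHermitian) :
    (Finset.univ.val.map hAB.eigenvalues)
      = (Finset.univ.val.map fun x : Fin p × Fin q => hA.eigenvalues x.1 * hB.eigenvalues x.2) := by
  have h1 := my_charpoly_hermitian hAB
  have h2 := my_charpoly_kron hA hB
  have key : ∀ (f : Fin p × Fin q → ℝ),
      (∏ x : Fin p × Fin q, (X - C (f x))).roots = Finset.univ.val.map f := by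
    intro f
    rw [Finset.prod_eq_multiset_prod]
    have : Multiset.map (fun x => X - C (f x)) Finset.univ.val
        = Multiset.map (fun a => X - C a) (Multiset.map f Finset.univ.val) := by
      rw [Multiset.map_map]; rfl
    rw [this, Polynomial.roots_multiset_prod_X_sub_C]
  have := congrArg Polynomial.roots (h1.symm.trans h2)
  rwa [key, key] at this

lemma my_filter_card_comp {α β : Type*} [Fintype α] [Fintype β] [DecidableEq α] [DecidableEq β]
    (σ : α ≃ β) (pr : β → Prop) [DecidablePred pr] :
    (Finset.univ.filter fun i : α => pr (σ i)).card = (Finset.univ.filter pr).card := by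
  rw [← Fintype.card_subtype, ← Fintype.card_subtype]
  exact Fintype.card_congr (σ.subtypeEquiv fun a => Iff.rfl)

lemma my_sorted_le {n : ℕ} (f : Fin n → ℝ) (t : ℝ) (k : Fin n)
    (h : (Finset.univ.filter fun i => t < f i).card ≤ (k : ℕ)) :
    (f ∘ Tuple.sort f) k.rev ≤ t := by
  by_contra hlt
  push_neg at hlt
  have hmono := Tuple.monotone_sort f
  have hsub : Finset.Ici k.rev ⊆ Finset.univ.filter (fun i => t < (f ∘ Tuple.sort f) i) := by
    intro i hi
    simp only [Finset.mem_filter, Finset.mem_univ, true_and]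
    exact lt_of_lt_of_le hlt (hmono (Finset.mem_Ici.mp hi))
  have hcard := Finset.card_le_card hsub
  rw [Fin.card_Ici] at hcard
  have hrev : (k.rev : ℕ) = n - (k + 1) := Fin.val_rev k
  have hcard2 : (Finset.univ.filter fun i => t < (f ∘ Tuple.sort f) i).card
      = (Finset.univ.filter fun i => t < f i).card :=
    my_filter_card_comp (Tuple.sort f) (fun j => t < f j)
  have hk := k.2
  omega

lemma my_card_filter_map {γ : Type*} [Fintype γ] [DecidableEq γ] (g : γ → ℝ) (t : ℝ) :
    (Finset.univ.filter fun x : γ => t < g x).card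
      = Multiset.countP (fun r => t < r) (Finset.univ.val.map g) := by
  rw [Multiset.countP_map]
  rfl

noncomputable def myPerm {ι : Type*} [Fintype ι] [DecidableEq ι] {M : Matrix ι ι ℝ}
    (hM : M.IsHermitian) : ι ≃ Fin (Fintype.card ι) :=
  (Fintype.equivFin ι).trans
    (((Tuple.sort (hM.eigenvalues ∘ (Fintype.equivFin ι).symm)).symm).trans Fin.revPerm)

lemma myPerm_spec {ι : Type*} [Fintype ι] [DecidableEq ι] {M : Matrix ι ι ℝ}
    (hM : M.IsHermitian) (i : ι) : eigDesc hM (myPerm hM i) = hM.eigenvalues i := by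
  simp [eigDesc, myPerm, Fin.rev_rev]

lemma my_eigDesc_nonneg {ι : Type*} [Fintype ι] [DecidableEq ι] {M : Matrix ι ι ℝ}
    (hM : M.PosSemidef) (i : Fin (Fintype.card ι)) : 0 ≤ eigDesc hM.1 i :=
  hM.eigenvalues_nonneg _

/-- if `A`, `B` are symmetric positive semi-definite with descending
eigenvalues `λᵢ(A) ≤ e^{−c₁ i}` and `λⱼ(B) ≤ e^{−c₂ j}` (1-based indices, `c₁, c₂ > 0`),
then the `k`-th largest eigenvalue of the Kronecker product `A ⊗ B` is at most
`e^{−min(c₁,c₂)√k}`. -/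
theorem kronecker_eigenvalue_decay
    {p q : ℕ} {A : Matrix (Fin p) (Fin p) ℝ} {B : Matrix (Fin q) (Fin q) ℝ}
    (hA : A.PosSemidef) (hB : B.PosSemidef)
    (c₁ c₂ : ℝ) (hc₁ : 0 < c₁) (hc₂ : 0 < c₂)
    (hAdecay : ∀ i : Fin (Fintype.card (Fin p)), eigDesc hA.1 i ≤ Real.exp (-c₁ * ((i : ℕ) + 1)))
    (hBdecay : ∀ j : Fin (Fintype.card (Fin q)), eigDesc hB.1 j ≤ Real.exp (-c₂ * ((j : ℕ) + 1)))
    (hAB : (A ⊗ₖ B).IsHermitian) :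
    ∀ k : Fin (Fintype.card (Fin p × Fin q)),
      eigDesc hAB k ≤ Real.exp (-(min c₁ c₂) * Real.sqrt ((k : ℕ) + 1)) := by
  intro k
  set c := min c₁ c₂ with hcdef
  have hc0 : 0 < c := lt_min hc₁ hc₂
  set t := Real.exp (-c * Real.sqrt ((k : ℕ) + 1)) with htdef
  set r := Nat.sqrt (k : ℕ) with hrdef
  have hpairs : (Finset.univ.filter
      fun y : Fin (Fintype.card (Fin p)) × Fin (Fintype.card (Fin q)) =>
      t < eigDesc hA.1 y.1 * eigDesc hB.1 y.2).card ≤ (k : ℕ) := by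
    have hsub : (Finset.univ.filter
        fun y : Fin (Fintype.card (Fin p)) × Fin (Fintype.card (Fin q)) =>
        t < eigDesc hA.1 y.1 * eigDesc hB.1 y.2)
        ⊆ Finset.univ.filter fun y => (y.1 : ℕ) < r - 1 ∧ (y.2 : ℕ) < r - 1 := by
      intro y hy
      simp only [Finset.mem_filter, Finset.mem_univ, true_and] at hy ⊢
      have h1 := hAdecay y.1
      have h2 := hBdecay y.2
      have hb0 : 0 ≤ eigDesc hB.1 y.2 := my_eigDesc_nonneg hB y.2
      have hprod : eigDesc hA.1 y.1 * eigDesc hB.1 y.2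
          ≤ Real.exp (-c₁ * ((y.1 : ℕ) + 1)) * Real.exp (-c₂ * ((y.2 : ℕ) + 1)) :=
        mul_le_mul h1 h2 hb0 (Real.exp_nonneg _)
      have hstep : Real.exp (-c₁ * ((y.1 : ℕ) + 1)) * Real.exp (-c₂ * ((y.2 : ℕ) + 1))
          ≤ Real.exp (-c * ((((y.1 : ℕ) + (y.2 : ℕ) + 2 : ℕ)) : ℝ)) := by
        rw [← Real.exp_add, Real.exp_le_exp]
        have l1 : c ≤ c₁ := min_le_left _ _
        have l2 : c ≤ c₂ := min_le_right _ _
        have e1 : c * (((y.1 : ℕ) : ℝ) + 1) ≤ c₁ * (((y.1 : ℕ) : ℝ) + 1) :=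
          mul_le_mul_of_nonneg_right l1 (by positivity)
        have e2 : c * (((y.2 : ℕ) : ℝ) + 1) ≤ c₂ * (((y.2 : ℕ) : ℝ) + 1) :=
          mul_le_mul_of_nonneg_right l2 (by positivity)
        push_cast
        nlinarith
      have ht2 : t < Real.exp (-c * ((((y.1 : ℕ) + (y.2 : ℕ) + 2 : ℕ)) : ℝ)) :=
        lt_of_lt_of_le (lt_of_lt_of_le hy hprod) hstep
      rw [htdef, Real.exp_lt_exp] at ht2
      have hlt : ((((y.1 : ℕ) + (y.2 : ℕ) + 2 : ℕ)) : ℝ) < Real.sqrt ((k : ℕ) + 1) := by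
        have hms : c * ((((y.1 : ℕ) + (y.2 : ℕ) + 2 : ℕ)) : ℝ)
            < c * Real.sqrt ((k : ℕ) + 1) := by linarith
        exact (mul_lt_mul_iff_right₀ hc0).mp hms
      have hsq : ((((y.1 : ℕ) + (y.2 : ℕ) + 2 : ℕ)) : ℝ) ^ 2 < ((k : ℕ) : ℝ) + 1 := by
        have := (Real.lt_sqrt (by positivity)).mp hlt
        push_cast at this ⊢
        linarith
      have hnat : ((y.1 : ℕ) + (y.2 : ℕ) + 2) ^ 2 < (k : ℕ) + 1 := by exact_mod_cast hsq
      have hler : (y.1 : ℕ) + (y.2 : ℕ) + 2 ≤ r := by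
        rw [hrdef]
        exact Nat.le_sqrt.mpr (by nlinarith)
      omega
    have hcard1 := Finset.card_le_card hsub
    have hcard2 : (Finset.univ.filter
        fun y : Fin (Fintype.card (Fin p)) × Fin (Fintype.card (Fin q)) =>
        (y.1 : ℕ) < r - 1 ∧ (y.2 : ℕ) < r - 1).card ≤ (r - 1) * (r - 1) := by
      rw [show (r - 1) * (r - 1) = (Finset.range (r - 1) ×ˢ Finset.range (r - 1)).card by simp]
      apply Finset.card_le_card_of_injOn (fun y => ((y.1 : ℕ), (y.2 : ℕ)))
      · intro y hy
        simp only [Finset.coe_filter, Set.mem_setOf_eq, Finset.mem_filter, Finset.mem_univ, true_and] at hy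
        exact Finset.mem_product.mpr
          ⟨Finset.mem_range.mpr hy.1, Finset.mem_range.mpr hy.2⟩
      · intro a _ b _ hab
        have h1 : (a.1 : ℕ) = b.1 := congrArg Prod.fst hab
        have h2 : (a.2 : ℕ) = b.2 := congrArg Prod.snd hab
        exact Prod.ext (Fin.val_injective h1) (Fin.val_injective h2)
    have hfin : (r - 1) * (r - 1) ≤ (k : ℕ) :=
      le_trans (Nat.mul_le_mul (Nat.sub_le _ _) (Nat.sub_le _ _)) (Nat.sqrt_le _)
    omega
  have hperm : (Finset.univ.filter fun x : Fin p × Fin q =>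
      t < hA.1.eigenvalues x.1 * hB.1.eigenvalues x.2).card
      = (Finset.univ.filter
        fun y : Fin (Fintype.card (Fin p)) × Fin (Fintype.card (Fin q)) =>
        t < eigDesc hA.1 y.1 * eigDesc hB.1 y.2).card := by
    have hfx : ∀ x : Fin p × Fin q, hA.1.eigenvalues x.1 * hB.1.eigenvalues x.2
        = eigDesc hA.1 ((myPerm hA.1) x.1) * eigDesc hB.1 ((myPerm hB.1) x.2) := by
      intro x; rw [myPerm_spec, myPerm_spec]
    calc (Finset.univ.filter fun x : Fin p × Fin q =>
          t < hA.1.eigenvalues x.1 * hB.1.eigenvalues x.2).card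
        = (Finset.univ.filter fun x : Fin p × Fin q =>
            t < eigDesc hA.1 ((myPerm hA.1) x.1) * eigDesc hB.1 ((myPerm hB.1) x.2)).card := by
          congr 1
          apply Finset.filter_congr
          intro x _
          rw [hfx x]
      _ = _ := my_filter_card_comp ((myPerm hA.1).prodCongr (myPerm hB.1))
          (fun y => t < eigDesc hA.1 y.1 * eigDesc hB.1 y.2)
  have hcount : (Finset.univ.filter fun x : Fin p × Fin q => t < hAB.eigenvalues x).card
      = (Finset.univ.filter fun x : Fin p × Fin q =>
        t < hA.1.eigenvalues x.1 * hB.1.eigenvalues x.2).card := by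
    rw [my_card_filter_map, my_card_filter_map, my_multiset_eq hA.1 hB.1 hAB]
  have hfin : (Finset.univ.filter fun i : Fin (Fintype.card (Fin p × Fin q)) =>
      t < hAB.eigenvalues ((Fintype.equivFin (Fin p × Fin q)).symm i)).card ≤ (k : ℕ) := by
    rw [my_filter_card_comp (Fintype.equivFin (Fin p × Fin q)).symm
      (fun x => t < hAB.eigenvalues x), hcount, hperm]
    exact hpairs
  exact my_sorted_le (hAB.eigenvalues ∘ (Fintype.equivFin (Fin p × Fin q)).symm) t k hfin
end
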